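/- arXiv:2509.10415 — 6 statements merged into one kernel-verified Lean document; each statement's English description precedes it below -/
import Mathlib

section
/- (Theorem 5.2, geometric decay of detail coefficients.) Let p ≥ 1 and Γ ≥ 0, and let t ↦ μ_t be a curve of measures in P_p(ℝ^d) defined for all real t and satisfying W_p(μ_s, μ_t) ≤ Γ·|s − t| for all s, t ∈ ℝ (e.g., an absolutely continuous curve whose metric derivative is everywhere at most Γ). Fix an integer ℓ ≥ 1 and i ∈ ℤ. Let γ ∈ Π(μ_{2i·2^{-ℓ}}, μ_{(2i+2)·2^{-ℓ}}) be a coupling attaining the infimum defining W_p(μ_{2i·2^{-ℓ}}, μ_{(2i+2)·2^{-ℓ}})^p, and let m = (π^{1/2})_#γ. Then W_p(μ_{(2i+1)·2^{-ℓ}}, m) ≤ Γ·2^{1−ℓ}. In other words, the detail coefficients of the elementary multiscale transform of the dyadic samples of such a curve satisfy ‖ψ^{(ℓ)}‖_∞ ≤ Γ·2^{1−ℓ}. -/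
open MeasureTheory ENNReal NNReal ProbabilityTheory

noncomputable section

variable {E : Type*} [NormedAddCommGroup E] [MeasurableSpace E]

/-- The set Π(μ,ν) of couplings of `μ` and `ν`: measures on the product whose
first marginal is `μ` and second marginal is `ν`. -/
def couplings (μ ν : Measure E) : Set (Measure (E × E)) :=
  {γ | γ.map Prod.fst = μ ∧ γ.map Prod.snd = ν}

/-- The Kantorovich transport cost `∫ ‖x - y‖^p dγ(x,y)`. -/
def transportCost (p : ℝ) (γ : Measure (E × E)) : ℝ≥0∞ :=
  ∫⁻ z, (‖z.1 - z.2‖₊ : ℝ≥0∞) ^ p ∂γ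

/-- `W_p(μ,ν)^p = inf_{γ ∈ Π(μ,ν)} ∫ ‖x-y‖^p dγ`. -/
def wassersteinPow (p : ℝ) (μ ν : Measure E) : ℝ≥0∞ :=
  ⨅ γ ∈ couplings μ ν, transportCost p γ

/-- The `p`-Wasserstein distance `W_p(μ,ν)`. -/
def wasserstein (p : ℝ) (μ ν : Measure E) : ℝ≥0∞ :=
  wassersteinPow p μ ν ^ (1 / p)

/-- Membership in the Wasserstein space `P_p`: a Borel probability measure with
finite `p`-th moment. -/
def MemPp (p : ℝ) (μ : Measure E) : Prop :=
  IsProbabilityMeasure μ ∧ ∫⁻ x, (‖x‖₊ : ℝ≥0∞) ^ p ∂μ < ∞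

omit [NormedAddCommGroup E] in
lemma isProb_of_couplings {μ ν : Measure E} [IsProbabilityMeasure μ] {γ : Measure (E × E)}
    (h : γ ∈ couplings μ ν) : IsProbabilityMeasure γ := by
  constructor
  have : (γ.map Prod.fst) Set.univ = γ Set.univ := by
    rw [Measure.map_apply measurable_fst MeasurableSet.univ]; simp
  rw [h.1] at this
  rw [← this, measure_univ]

lemma wasserstein_le_of_couplings {p : ℝ} (hp : 0 < p) {μ ν : Measure E} {τ : Measure (E × E)}
    (hτ : τ ∈ couplings μ ν) : wasserstein p μ ν ≤ transportCost p τ ^ (1 / p) :=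
  ENNReal.rpow_le_rpow (iInf₂_le τ hτ) (by positivity)

lemma wasserstein_eq_biInf {p : ℝ} (hp : 0 < p) (μ ν : Measure E) :
    wasserstein p μ ν = ⨅ τ ∈ couplings μ ν, transportCost p τ ^ (1 / p) := by
  rw [wasserstein, wassersteinPow, iInf_subtype', iInf_subtype']
  exact (ENNReal.orderIsoRpow (1 / p) (by positivity)).map_iInf
    (fun τ : couplings μ ν => transportCost p τ.1)

section Glue

variable {X : Type*} [NormedAddCommGroup X] [MeasurableSpace X] [BorelSpace X] [PolishSpace X]

lemma measurable_costFn (p : ℝ) : Measurable fun z : X × X => (‖z.1 - z.2‖₊ : ℝ≥0∞) ^ p :=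
  ((measurable_fst.sub measurable_snd).nnnorm.coe_nnreal_ennreal).pow_const p

lemma glue {p : ℝ} (hp : 1 ≤ p) {μ ν ρ : Measure X}
    [IsProbabilityMeasure μ] [IsProbabilityMeasure ν] [IsProbabilityMeasure ρ]
    {σ θ : Measure (X × X)} (hσ : σ ∈ couplings μ ν) (hθ : θ ∈ couplings ν ρ) :
    ∃ τ ∈ couplings μ ρ,
      transportCost p τ ^ (1/p) ≤ transportCost p σ ^ (1/p) + transportCost p θ ^ (1/p) := by
  have hp0 : (0:ℝ) ≤ p := le_trans zero_le_one hp
  haveI : IsProbabilityMeasure σ := isProb_of_couplings hσ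
  haveI : IsProbabilityMeasure θ := isProb_of_couplings hθ
  set σ' : Measure (X × X) := σ.map Prod.swap with hσ'def
  haveI : IsProbabilityMeasure σ' := Measure.isProbabilityMeasure_map measurable_swap.aemeasurable
  have hσ'fst : σ'.fst = ν := by
    rw [Measure.fst, hσ'def, Measure.map_map measurable_fst measurable_swap]
    exact hσ.2
  have hθfst : θ.fst = ν := by rw [Measure.fst]; exact hθ.1
  set κ := σ'.condKernel with hκdef
  set η := θ.condKernel with hηdef
  have hκ : ν ⊗ₘ κ = σ' := by rw [← hσ'fst]; exact σ'.disintegrate _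
  have hη : ν ⊗ₘ η = θ := by rw [← hθfst]; exact θ.disintegrate _
  set base : Measure (X × (X × X)) := ν ⊗ₘ (κ ×ₖ η) with hbase
  set τ : Measure (X × X) := base.map Prod.snd with hτdef
  have hg1 : Measurable fun w : X × (X × X) => (w.2.1, w.1) :=
    (measurable_fst.comp measurable_snd).prodMk measurable_fst
  have hg2 : Measurable fun w : X × (X × X) => (w.1, w.2.2) :=
    measurable_fst.prodMk (measurable_snd.comp measurable_snd)
  have h1 : base.map (fun w : X × (X × X) => (w.2.1, w.1)) = σ := by
    have hswap : σ = σ'.map Prod.swap := by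
      rw [hσ'def, Measure.map_map measurable_swap measurable_swap]
      simp [Function.comp_def]
    ext s hs
    rw [Measure.map_apply hg1 hs, hbase, Measure.compProd_apply (hg1 hs),
      hswap, Measure.map_apply measurable_swap hs, ← hκ,
      Measure.compProd_apply (measurable_swap hs)]
    refine lintegral_congr fun x => ?_
    have hset : (Prod.mk x ⁻¹' ((fun w : X × (X × X) => (w.2.1, w.1)) ⁻¹' s))
        = ((fun y => (y, x)) ⁻¹' s) ×ˢ Set.univ := by
      ext ⟨y, z⟩; simp
    rw [hset, Kernel.prod_apply, Measure.prod_prod, measure_univ, mul_one]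
    rfl
  have h2 : base.map (fun w : X × (X × X) => (w.1, w.2.2)) = θ := by
    ext s hs
    rw [Measure.map_apply hg2 hs, hbase, Measure.compProd_apply (hg2 hs),
      ← hη, Measure.compProd_apply hs]
    refine lintegral_congr fun x => ?_
    have hset : (Prod.mk x ⁻¹' ((fun w : X × (X × X) => (w.1, w.2.2)) ⁻¹' s))
        = Set.univ ×ˢ (Prod.mk x ⁻¹' s) := by
      ext ⟨y, z⟩; simp
    rw [hset, Kernel.prod_apply, Measure.prod_prod, measure_univ, one_mul]
  refine ⟨τ, ⟨?_, ?_⟩, ?_⟩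
  · rw [hτdef, Measure.map_map measurable_fst measurable_snd]
    have : (Prod.fst ∘ Prod.snd : X × (X × X) → X)
        = Prod.fst ∘ (fun w : X × (X × X) => (w.2.1, w.1)) := rfl
    rw [this, ← Measure.map_map measurable_fst hg1, h1]
    exact hσ.1
  · rw [hτdef, Measure.map_map measurable_snd measurable_snd]
    have : (Prod.snd ∘ Prod.snd : X × (X × X) → X)
        = Prod.snd ∘ (fun w : X × (X × X) => (w.1, w.2.2)) := rfl
    rw [this, ← Measure.map_map measurable_snd hg2, h2]
    exact hθ.2
  · have hF : Measurable fun w : X × (X × X) => (‖w.2.1 - w.1‖₊ : ℝ≥0∞) :=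
      ((measurable_fst.comp measurable_snd).sub measurable_fst).nnnorm.coe_nnreal_ennreal
    have hG : Measurable fun w : X × (X × X) => (‖w.1 - w.2.2‖₊ : ℝ≥0∞) :=
      (measurable_fst.sub (measurable_snd.comp measurable_snd)).nnnorm.coe_nnreal_ennreal
    have hmono : transportCost p τ ≤
        ∫⁻ w, ((fun w : X × (X × X) => (‖w.2.1 - w.1‖₊ : ℝ≥0∞))
          + fun w : X × (X × X) => (‖w.1 - w.2.2‖₊ : ℝ≥0∞)) w ^ p ∂base := by
      rw [transportCost, hτdef, lintegral_map (measurable_costFn p) measurable_snd]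
      refine lintegral_mono fun w => ENNReal.rpow_le_rpow ?_ hp0
      simp only [Pi.add_apply]
      calc (‖w.2.1 - w.2.2‖₊ : ℝ≥0∞) = (‖(w.2.1 - w.1) + (w.1 - w.2.2)‖₊ : ℝ≥0∞) := by
            rw [sub_add_sub_cancel]
        _ ≤ (‖w.2.1 - w.1‖₊ : ℝ≥0∞) + (‖w.1 - w.2.2‖₊ : ℝ≥0∞) := by
            exact_mod_cast nnnorm_add_le _ _
    have hFσ : (∫⁻ w, (‖w.2.1 - w.1‖₊ : ℝ≥0∞) ^ p ∂base) = transportCost p σ := by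
      rw [transportCost, ← h1, lintegral_map (measurable_costFn p) hg1]
    have hGθ : (∫⁻ w, (‖w.1 - w.2.2‖₊ : ℝ≥0∞) ^ p ∂base) = transportCost p θ := by
      rw [transportCost, ← h2, lintegral_map (measurable_costFn p) hg2]
    calc transportCost p τ ^ (1/p)
        ≤ (∫⁻ w, ((fun w : X × (X × X) => (‖w.2.1 - w.1‖₊ : ℝ≥0∞))
            + fun w : X × (X × X) => (‖w.1 - w.2.2‖₊ : ℝ≥0∞)) w ^ p ∂base) ^ (1/p) :=
          ENNReal.rpow_le_rpow hmono (by positivity)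
      _ ≤ (∫⁻ w, (‖w.2.1 - w.1‖₊ : ℝ≥0∞) ^ p ∂base) ^ (1/p)
            + (∫⁻ w, (‖w.1 - w.2.2‖₊ : ℝ≥0∞) ^ p ∂base) ^ (1/p) :=
          ENNReal.lintegral_Lp_add_le hF.aemeasurable hG.aemeasurable hp
      _ = transportCost p σ ^ (1/p) + transportCost p θ ^ (1/p) := by rw [hFσ, hGθ]

lemma wasserstein_triangle {p : ℝ} (hp : 1 ≤ p) (μ ν ρ : Measure X)
    [IsProbabilityMeasure μ] [IsProbabilityMeasure ν] [IsProbabilityMeasure ρ] :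
    wasserstein p μ ρ ≤ wasserstein p μ ν + wasserstein p ν ρ := by
  have hp0 : (0:ℝ) < p := lt_of_lt_of_le one_pos hp
  rw [wasserstein_eq_biInf hp0 μ ν, wasserstein_eq_biInf hp0 ν ρ, iInf_subtype', iInf_subtype',
    ENNReal.iInf_add]
  refine le_iInf fun σ => ?_
  rw [ENNReal.add_iInf]
  refine le_iInf fun θ => ?_
  obtain ⟨τ, hτ, hcost⟩ := glue hp σ.2 θ.2
  exact (wasserstein_le_of_couplings hp0 hτ).trans hcost

end Glue

/-- Theorem 5.2, geometric decay of detail coefficients. -/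
theorem detail_decay {d : ℕ} (p : ℝ) (hp : 1 ≤ p) (Γ : ℝ) (hΓ : 0 ≤ Γ)
    (μ : ℝ → Measure (EuclideanSpace ℝ (Fin d))) (hμ : ∀ t, MemPp p (μ t))
    (hLip : ∀ s t : ℝ, wasserstein p (μ s) (μ t) ≤ ENNReal.ofReal (Γ * |s - t|))
    (ℓ : ℕ) (hℓ : 1 ≤ ℓ) (i : ℤ)
    (γ : Measure (EuclideanSpace ℝ (Fin d) × EuclideanSpace ℝ (Fin d)))
    (hγ : γ ∈ couplings (μ (((2*i : ℤ) : ℝ) * (2:ℝ)^(-(ℓ:ℤ))))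
      (μ (((2*i+2 : ℤ) : ℝ) * (2:ℝ)^(-(ℓ:ℤ)))))
    (hopt : transportCost p γ = wassersteinPow p
      (μ (((2*i : ℤ) : ℝ) * (2:ℝ)^(-(ℓ:ℤ)))) (μ (((2*i+2 : ℤ) : ℝ) * (2:ℝ)^(-(ℓ:ℤ)))))
    (m : Measure (EuclideanSpace ℝ (Fin d)))
    (hm : m = γ.map (fun z => (1/2 : ℝ) • z.1 + (1/2 : ℝ) • z.2)) :
    wasserstein p (μ (((2*i+1 : ℤ) : ℝ) * (2:ℝ)^(-(ℓ:ℤ)))) m ≤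
      ENNReal.ofReal (Γ * (2:ℝ)^((1:ℤ) - (ℓ:ℤ))) := by
  set X := EuclideanSpace ℝ (Fin d)
  have hp0 : (0:ℝ) < p := lt_of_lt_of_le one_pos hp
  set c : ℝ := (2:ℝ)^(-(ℓ:ℤ)) with hc
  have hcpos : 0 < c := by positivity
  set tL : ℝ := ((2*i : ℤ) : ℝ) * c
  set tM : ℝ := ((2*i+1 : ℤ) : ℝ) * c
  set tR : ℝ := ((2*i+2 : ℤ) : ℝ) * c
  haveI : IsProbabilityMeasure (μ tL) := (hμ tL).1
  haveI : IsProbabilityMeasure (μ tM) := (hμ tM).1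
  haveI : IsProbabilityMeasure (μ tR) := (hμ tR).1
  haveI : IsProbabilityMeasure γ := isProb_of_couplings hγ
  have hmid : Measurable fun z : X × X => (1/2 : ℝ) • z.1 + (1/2 : ℝ) • z.2 :=
    Measurable.add (f := fun z : X × X => (1/2 : ℝ) • z.1) (g := fun z : X × X => (1/2 : ℝ) • z.2)
      (measurable_fst.const_smul (1/2 : ℝ)) (measurable_snd.const_smul (1/2 : ℝ))
  haveI : IsProbabilityMeasure m := by
    rw [hm]; exact Measure.isProbabilityMeasure_map hmid.aemeasurable
  -- the coupling γ' between μ tL and m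
  set g : X × X → X × X := fun z => (z.1, (1/2 : ℝ) • z.1 + (1/2 : ℝ) • z.2) with hgdef
  have hg : Measurable g := measurable_fst.prodMk hmid
  set γ' : Measure (X × X) := γ.map g with hγ'def
  have hγ'mem : γ' ∈ couplings (μ tL) m := by
    constructor
    · rw [hγ'def, Measure.map_map measurable_fst hg]
      exact hγ.1
    · rw [hγ'def, Measure.map_map measurable_snd hg, hm]
      rfl
  -- cost of γ'
  have hcost : transportCost p γ' = (1/2 : ℝ≥0∞) ^ p * transportCost p γ := by
    rw [transportCost, hγ'def, lintegral_map (measurable_costFn p) hg, transportCost,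
      ← lintegral_const_mul _ (measurable_costFn p)]
    refine lintegral_congr fun z => ?_
    have hz : (g z).1 - (g z).2 = (1/2 : ℝ) • (z.1 - z.2) := by
      simp only [hgdef]
      module
    rw [hz, nnnorm_smul]
    push_cast
    rw [ENNReal.mul_rpow_of_nonneg _ _ (le_trans zero_le_one hp)]
    congr 2
    simp [Real.nnnorm_of_nonneg]
  -- W(μ tL, m) ≤ (1/2) * W(μ tL, μ tR)
  have hWLm : wasserstein p (μ tL) m ≤ (1/2 : ℝ≥0∞) * wasserstein p (μ tL) (μ tR) := by
    refine (wasserstein_le_of_couplings hp0 hγ'mem).trans ?_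
    rw [hcost, hopt, ENNReal.mul_rpow_of_nonneg _ _ (by positivity : (0:ℝ) ≤ 1/p),
      ← ENNReal.rpow_mul, mul_one_div_cancel hp0.ne', ENNReal.rpow_one]
    rfl
  -- Lipschitz bounds
  have hML : wasserstein p (μ tM) (μ tL) ≤ ENNReal.ofReal (Γ * c) := by
    have h := hLip tM tL
    have : |tM - tL| = c := by
      have : tM - tL = c := by simp only [tM, tL]; push_cast; ring
      rw [this, abs_of_pos hcpos]
    rwa [this] at h
  have hLR : wasserstein p (μ tL) (μ tR) ≤ ENNReal.ofReal (Γ * (2 * c)) := by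
    have h := hLip tL tR
    have : |tL - tR| = 2 * c := by
      have : tL - tR = -(2 * c) := by simp only [tL, tR]; push_cast; ring
      rw [this, abs_neg, abs_of_pos (by positivity)]
    rwa [this] at h
  have hhalf : (1/2 : ℝ≥0∞) = ENNReal.ofReal (1/2) := by
    rw [ENNReal.ofReal_div_of_pos (by norm_num), ENNReal.ofReal_one, ENNReal.ofReal_ofNat]
  calc wasserstein p (μ tM) m
      ≤ wasserstein p (μ tM) (μ tL) + wasserstein p (μ tL) m :=
        wasserstein_triangle hp _ _ _
    _ ≤ ENNReal.ofReal (Γ * c) + (1/2 : ℝ≥0∞) * ENNReal.ofReal (Γ * (2 * c)) :=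
        add_le_add hML (hWLm.trans (mul_le_mul_right hLR _))
    _ = ENNReal.ofReal (Γ * c) + ENNReal.ofReal (Γ * c) := by
        rw [hhalf, ← ENNReal.ofReal_mul (by norm_num)]
        congr 1
        ring_nf
    _ = ENNReal.ofReal (Γ * (2:ℝ)^((1:ℤ) - (ℓ:ℤ))) := by
        rw [← ENNReal.ofReal_add (by positivity) (by positivity)]
        congr 1
        have : (2:ℝ)^((1:ℤ) - (ℓ:ℤ)) = 2 * c := by
          rw [hc, zpow_sub₀ (two_ne_zero), zpow_one, zpow_neg]; ring
        rw [this]; ring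
end
end

section
/- (Stability of the elementary subdivision scheme for dense sequences.) Let p ≥ 1 and δ > 0. Let μ, ν, μ', ν' ∈ P_p(ℝ^d) with W_p(μ, ν) ≤ δ and W_p(μ', ν') ≤ δ. Let γ ∈ Π(μ, ν) and γ' ∈ Π(μ', ν') be couplings attaining the respective infima defining W_p(μ,ν)^p and W_p(μ',ν')^p, and set m = (π^{1/2})_#γ and m' = (π^{1/2})_#γ'. Then W_p(m, m') ≤ δ + W_p(μ, μ'). -/
open MeasureTheory ENNReal NNReal ProbabilityTheory

noncomputable section

variable {E : Type*} [NormedAddCommGroup E] [MeasurableSpace E]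

section Aux

open Set

variable {α β α' β' : Type*} [MeasurableSpace α] [MeasurableSpace β]
  [MeasurableSpace α'] [MeasurableSpace β']

/-- First marginal of the glued measure. -/
lemma glue_map_fst_aux (η : Measure (α × α')) [IsProbabilityMeasure η]
    (κ : Kernel α β) [IsMarkovKernel κ] (κ' : Kernel α' β') [IsMarkovKernel κ'] :
    (η ⊗ₘ ((κ.comap Prod.fst measurable_fst) ×ₖ (κ'.comap Prod.snd measurable_snd))).map
      (fun z => (z.1.1, z.2.1)) = η.fst ⊗ₘ κ := by
  have hmeas : Measurable fun z : (α × α') × (β × β') => (z.1.1, z.2.1) :=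
    (measurable_fst.comp measurable_fst).prodMk (measurable_fst.comp measurable_snd)
  refine ext_of_generate_finite _ generateFrom_prod.symm isPiSystem_prod ?_ ?_
  · rintro _ ⟨s, hs, t, ht, rfl⟩
    rw [Measure.map_apply hmeas (hs.prod ht)]
    have hpre : (fun z : (α × α') × (β × β') => (z.1.1, z.2.1)) ⁻¹' (s ×ˢ t)
        = (s ×ˢ univ) ×ˢ (t ×ˢ univ) := by
      ext z; simp [Set.mem_prod]
    rw [hpre, Measure.compProd_apply_prod (hs.prod MeasurableSet.univ)
      (ht.prod MeasurableSet.univ), Measure.compProd_apply_prod hs ht]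
    have hker : ∀ a : α × α',
        ((κ.comap Prod.fst measurable_fst) ×ₖ (κ'.comap Prod.snd measurable_snd)) a (t ×ˢ univ)
          = κ a.1 t := by
      intro a
      rw [Kernel.prod_apply, Measure.prod_prod, Kernel.comap_apply, Kernel.comap_apply,
        measure_univ, mul_one]
    simp_rw [hker]
    have hsp : s ×ˢ (univ : Set α') = Prod.fst ⁻¹' s := by ext; simp
    rw [hsp, Measure.fst, setLIntegral_map hs (κ.measurable_coe ht) measurable_fst]
  · haveI : IsProbabilityMeasure (η.fst) := by
      constructor; rw [Measure.fst, Measure.map_apply measurable_fst MeasurableSet.univ]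
      simp
    haveI := Measure.isProbabilityMeasure_map (μ := η ⊗ₘ ((κ.comap Prod.fst measurable_fst) ×ₖ
      (κ'.comap Prod.snd measurable_snd))) hmeas.aemeasurable
    simp [measure_univ]

/-- Second marginal of the glued measure. -/
lemma glue_map_snd_aux (η : Measure (α × α')) [IsProbabilityMeasure η]
    (κ : Kernel α β) [IsMarkovKernel κ] (κ' : Kernel α' β') [IsMarkovKernel κ'] :
    (η ⊗ₘ ((κ.comap Prod.fst measurable_fst) ×ₖ (κ'.comap Prod.snd measurable_snd))).map
      (fun z => (z.1.2, z.2.2)) = η.snd ⊗ₘ κ' := by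
  have hmeas : Measurable fun z : (α × α') × (β × β') => (z.1.2, z.2.2) :=
    (measurable_snd.comp measurable_fst).prodMk (measurable_snd.comp measurable_snd)
  refine ext_of_generate_finite _ generateFrom_prod.symm isPiSystem_prod ?_ ?_
  · rintro _ ⟨s, hs, t, ht, rfl⟩
    rw [Measure.map_apply hmeas (hs.prod ht)]
    have hpre : (fun z : (α × α') × (β × β') => (z.1.2, z.2.2)) ⁻¹' (s ×ˢ t)
        = ((univ : Set α) ×ˢ s) ×ˢ ((univ : Set β) ×ˢ t) := by
      ext z; simp [Set.mem_prod]
    rw [hpre, Measure.compProd_apply_prod (MeasurableSet.univ.prod hs)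
      (MeasurableSet.univ.prod ht), Measure.compProd_apply_prod hs ht]
    have hker : ∀ a : α × α',
        ((κ.comap Prod.fst measurable_fst) ×ₖ (κ'.comap Prod.snd measurable_snd)) a
          ((univ : Set β) ×ˢ t) = κ' a.2 t := by
      intro a
      rw [Kernel.prod_apply, Measure.prod_prod, Kernel.comap_apply, Kernel.comap_apply,
        measure_univ, one_mul]
    simp_rw [hker]
    have hsp : (univ : Set α) ×ˢ s = Prod.snd ⁻¹' s := by ext; simp
    rw [hsp, Measure.snd, setLIntegral_map hs (κ'.measurable_coe ht) measurable_snd]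
  · haveI : IsProbabilityMeasure (η.snd) := by
      constructor; rw [Measure.snd, Measure.map_apply measurable_snd MeasurableSet.univ]
      simp
    haveI := Measure.isProbabilityMeasure_map (μ := η ⊗ₘ ((κ.comap Prod.fst measurable_fst) ×ₖ
      (κ'.comap Prod.snd measurable_snd))) hmeas.aemeasurable
    simp [measure_univ]

/-- A coupling of probability measures is a probability measure. -/
lemma isProbabilityMeasure_of_coupling_aux {μ ν : Measure α} [IsProbabilityMeasure μ]
    {γ : Measure (α × α)} (h : γ ∈ couplings μ ν) : IsProbabilityMeasure γ := by
  have h1 : γ Set.univ = μ Set.univ := by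
    rw [← h.1, Measure.map_apply measurable_fst MeasurableSet.univ, Set.preimage_univ]
  exact ⟨by rw [h1, measure_univ]⟩

/-- `rpow` commutes with double infima. -/
lemma rpow_iInf₂_aux {ι : Type*} {S : ι → Prop} (f : ι → ℝ≥0∞) {c : ℝ} (hc : 0 < c) :
    (⨅ i, ⨅ _ : S i, f i) ^ c = ⨅ i, ⨅ _ : S i, f i ^ c := by
  have h1 := (ENNReal.orderIsoRpow c hc).map_iInf (fun i => ⨅ _ : S i, f i)
  have h2 : ∀ i, (ENNReal.orderIsoRpow c hc) (⨅ _ : S i, f i) = ⨅ _ : S i, f i ^ c := by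
    intro i
    have := (ENNReal.orderIsoRpow c hc).map_iInf (fun _ : S i => f i)
    simpa [ENNReal.orderIsoRpow_apply] using this
  simp only [ENNReal.orderIsoRpow_apply] at h1
  rw [h1]
  exact iInf_congr h2

end Aux

set_option maxHeartbeats 1000000

/-- stability of the elementary subdivision scheme for dense
sequences: the McCann midpoints satisfy `W_p(m, m') ≤ δ + W_p(μ, μ')`. -/
theorem midpoint_stability {d : ℕ} (p : ℝ) (hp : 1 ≤ p) (δ : ℝ) (hδ : 0 < δ)
    (μ ν μ' ν' : Measure (EuclideanSpace ℝ (Fin d)))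
    (hμ : MemPp p μ) (hν : MemPp p ν) (hμ' : MemPp p μ') (hν' : MemPp p ν')
    (hμν : wasserstein p μ ν ≤ ENNReal.ofReal δ)
    (hμν' : wasserstein p μ' ν' ≤ ENNReal.ofReal δ)
    (γ γ' : Measure (EuclideanSpace ℝ (Fin d) × EuclideanSpace ℝ (Fin d)))
    (hγ : γ ∈ couplings μ ν) (hγopt : transportCost p γ = wassersteinPow p μ ν)
    (hγ' : γ' ∈ couplings μ' ν') (hγ'opt : transportCost p γ' = wassersteinPow p μ' ν')
    (m m' : Measure (EuclideanSpace ℝ (Fin d)))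
    (hm : m = γ.map (fun z => (1/2 : ℝ) • z.1 + (1/2 : ℝ) • z.2))
    (hm' : m' = γ'.map (fun z => (1/2 : ℝ) • z.1 + (1/2 : ℝ) • z.2)) :
    wasserstein p m m' ≤ ENNReal.ofReal δ + wasserstein p μ μ' := by
  classical
  haveI := hμ.1; haveI := hν.1; haveI := hμ'.1; haveI := hν'.1
  haveI hγP : IsProbabilityMeasure γ := isProbabilityMeasure_of_coupling_aux hγ
  haveI hγ'P : IsProbabilityMeasure γ' := isProbabilityMeasure_of_coupling_aux hγ'
  have hp0 : (0:ℝ) < p := lt_of_lt_of_le one_pos hp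
  have hip : (0:ℝ) < 1/p := by positivity
  -- the midpoint map and measurability facts
  have hmid : Measurable (fun z : EuclideanSpace ℝ (Fin d) × EuclideanSpace ℝ (Fin d) => (1/2 : ℝ) • z.1 + (1/2 : ℝ) • z.2) :=
    Continuous.measurable (by fun_prop)
  have hcostInt : Measurable (fun w : EuclideanSpace ℝ (Fin d) × EuclideanSpace ℝ (Fin d) => (‖w.1 - w.2‖₊ : ℝ≥0∞) ^ p) :=
    ENNReal.continuous_rpow_const.measurable.comp (measurable_fst.sub measurable_snd).enorm
  have hpr1 : Measurable (fun z : (EuclideanSpace ℝ (Fin d) × EuclideanSpace ℝ (Fin d)) × (EuclideanSpace ℝ (Fin d) × EuclideanSpace ℝ (Fin d)) => (z.1.1, z.2.1)) :=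
    (measurable_fst.comp measurable_fst).prodMk (measurable_fst.comp measurable_snd)
  have hpr2 : Measurable (fun z : (EuclideanSpace ℝ (Fin d) × EuclideanSpace ℝ (Fin d)) × (EuclideanSpace ℝ (Fin d) × EuclideanSpace ℝ (Fin d)) => (z.1.2, z.2.2)) :=
    (measurable_snd.comp measurable_fst).prodMk (measurable_snd.comp measurable_snd)
  -- the key estimate for an arbitrary coupling of μ and μ'
  have key : ∀ η ∈ couplings μ μ',
      wasserstein p m m' ≤ ENNReal.ofReal δ + transportCost p η ^ (1/p) := by
    intro η hη
    haveI hηP : IsProbabilityMeasure η := isProbabilityMeasure_of_coupling_aux hη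
    set κK := ((γ.condKernel).comap Prod.fst measurable_fst ×ₖ
      (γ'.condKernel).comap Prod.snd measurable_snd) with hκK
    set θ := η ⊗ₘ κK with hθdef
    haveI : IsProbabilityMeasure θ := by rw [hθdef]; infer_instance
    have hηfst : η.fst = μ := hη.1
    have hηsnd : η.snd = μ' := hη.2
    have hγfst : γ.fst = μ := hγ.1
    have hγ'fst : γ'.fst = μ' := hγ'.1
    have hθ1 : θ.map (fun z => (z.1.1, z.2.1)) = γ := by
      rw [hθdef, hκK, glue_map_fst_aux η γ.condKernel γ'.condKernel, hηfst, ← hγfst,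
        Measure.disintegrate]
    have hθ2 : θ.map (fun z => (z.1.2, z.2.2)) = γ' := by
      rw [hθdef, hκK, glue_map_snd_aux η γ.condKernel γ'.condKernel, hηsnd, ← hγ'fst,
        Measure.disintegrate]
    have hθ0 : θ.map Prod.fst = η := Measure.fst_compProd η κK
    -- the coupling of the two midpoint measures
    set F := fun z : (EuclideanSpace ℝ (Fin d) × EuclideanSpace ℝ (Fin d)) × (EuclideanSpace ℝ (Fin d) × EuclideanSpace ℝ (Fin d)) =>
      ((1/2 : ℝ) • z.1.1 + (1/2 : ℝ) • z.2.1, (1/2 : ℝ) • z.1.2 + (1/2 : ℝ) • z.2.2) with hFdef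
    have hF : Measurable F := (hmid.comp hpr1).prodMk (hmid.comp hpr2)
    have hΘmem : θ.map F ∈ couplings m m' := by
      constructor
      · rw [Measure.map_map measurable_fst hF]
        have hcomp : (Prod.fst ∘ F)
            = (fun z : EuclideanSpace ℝ (Fin d) × EuclideanSpace ℝ (Fin d) => (1/2 : ℝ) • z.1 + (1/2 : ℝ) • z.2)
              ∘ (fun z : (EuclideanSpace ℝ (Fin d) × EuclideanSpace ℝ (Fin d)) × (EuclideanSpace ℝ (Fin d) × EuclideanSpace ℝ (Fin d)) => (z.1.1, z.2.1)) := rfl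
        rw [hcomp, ← Measure.map_map hmid hpr1, hθ1, hm]
      · rw [Measure.map_map measurable_snd hF]
        have hcomp : (Prod.snd ∘ F)
            = (fun z : EuclideanSpace ℝ (Fin d) × EuclideanSpace ℝ (Fin d) => (1/2 : ℝ) • z.1 + (1/2 : ℝ) • z.2)
              ∘ (fun z : (EuclideanSpace ℝ (Fin d) × EuclideanSpace ℝ (Fin d)) × (EuclideanSpace ℝ (Fin d) × EuclideanSpace ℝ (Fin d)) => (z.1.2, z.2.2)) := rfl
        rw [hcomp, ← Measure.map_map hmid hpr2, hθ2, hm']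
    -- the three comparison functions
    set f := fun z : (EuclideanSpace ℝ (Fin d) × EuclideanSpace ℝ (Fin d)) × (EuclideanSpace ℝ (Fin d) × EuclideanSpace ℝ (Fin d)) => (‖z.1.1 - z.1.2‖₊ : ℝ≥0∞) with hfdef
    set g := fun z : (EuclideanSpace ℝ (Fin d) × EuclideanSpace ℝ (Fin d)) × (EuclideanSpace ℝ (Fin d) × EuclideanSpace ℝ (Fin d)) => 2⁻¹ * (‖z.1.1 - z.2.1‖₊ : ℝ≥0∞) with hgdef
    set h := fun z : (EuclideanSpace ℝ (Fin d) × EuclideanSpace ℝ (Fin d)) × (EuclideanSpace ℝ (Fin d) × EuclideanSpace ℝ (Fin d)) => 2⁻¹ * (‖z.1.2 - z.2.2‖₊ : ℝ≥0∞) with hhdef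
    have hfm : Measurable f :=
      ((measurable_fst.comp measurable_fst).sub (measurable_snd.comp measurable_fst)).enorm
    have hgm : Measurable g := Measurable.const_mul
      ((measurable_fst.comp measurable_fst).sub (measurable_fst.comp measurable_snd)).enorm _
    have hhm : Measurable h := Measurable.const_mul
      ((measurable_snd.comp measurable_fst).sub (measurable_snd.comp measurable_snd)).enorm _
    -- the pointwise triangle inequality
    have hhalf : ∀ v : EuclideanSpace ℝ (Fin d), (‖(1/2:ℝ) • v‖₊ : ℝ≥0∞) = 2⁻¹ * ‖v‖₊ := by
      intro v; rw [nnnorm_smul]; push_cast; norm_num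
    have hpt : ∀ z : (EuclideanSpace ℝ (Fin d) × EuclideanSpace ℝ (Fin d)) × (EuclideanSpace ℝ (Fin d) × EuclideanSpace ℝ (Fin d)),
        (‖(F z).1 - (F z).2‖₊ : ℝ≥0∞) ≤ f z + (g z + h z) := by
      intro z
      obtain ⟨⟨x, x'⟩, y, y'⟩ := z
      have hd : ((1/2 : ℝ) • x + (1/2 : ℝ) • y) - ((1/2 : ℝ) • x' + (1/2 : ℝ) • y')
          = (x - x') + ((1/2:ℝ) • (y - x) + (1/2:ℝ) • (x' - y')) := by module
      show (‖((1/2 : ℝ) • x + (1/2 : ℝ) • y) - ((1/2 : ℝ) • x' + (1/2 : ℝ) • y')‖₊ : ℝ≥0∞)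
          ≤ (‖x - x'‖₊ : ℝ≥0∞) + (2⁻¹ * ‖x - y‖₊ + 2⁻¹ * ‖x' - y'‖₊)
      rw [hd]
      calc (‖(x - x') + ((1/2:ℝ) • (y - x) + (1/2:ℝ) • (x' - y'))‖₊ : ℝ≥0∞)
          ≤ ↑(‖x - x'‖₊ + (‖(1/2:ℝ) • (y - x)‖₊ + ‖(1/2:ℝ) • (x' - y')‖₊)) :=
            ENNReal.coe_le_coe.2 ((nnnorm_add_le _ _).trans
              (add_le_add_right (nnnorm_add_le _ _) _))
        _ = (‖x - x'‖₊ : ℝ≥0∞) + ((‖(1/2:ℝ) • (y - x)‖₊ : ℝ≥0∞) + ‖(1/2:ℝ) • (x' - y')‖₊) := by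
            push_cast; ring
        _ = (‖x - x'‖₊ : ℝ≥0∞) + (2⁻¹ * ‖x - y‖₊ + 2⁻¹ * ‖x' - y'‖₊) := by
            rw [hhalf, hhalf, ← neg_sub x y, nnnorm_neg]
    -- transport cost of the pushforward coupling
    have hTC : transportCost p (θ.map F) = ∫⁻ z, (‖(F z).1 - (F z).2‖₊ : ℝ≥0∞) ^ p ∂θ := by
      rw [transportCost, lintegral_map hcostInt hF]
    have step1 : transportCost p (θ.map F) ≤ ∫⁻ z, (f z + (g z + h z)) ^ p ∂θ := by
      rw [hTC]
      exact lintegral_mono fun z => ENNReal.rpow_le_rpow (hpt z) hp0.le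
    -- Minkowski inequality (twice)
    have mink : (∫⁻ z, (f z + (g z + h z)) ^ p ∂θ) ^ (1/p)
        ≤ (∫⁻ z, f z ^ p ∂θ) ^ (1/p)
          + ((∫⁻ z, g z ^ p ∂θ) ^ (1/p) + (∫⁻ z, h z ^ p ∂θ) ^ (1/p)) :=
      (ENNReal.lintegral_Lp_add_le hfm.aemeasurable (hgm.add hhm).aemeasurable hp).trans
        (add_le_add_right (ENNReal.lintegral_Lp_add_le hgm.aemeasurable hhm.aemeasurable hp) _)
    -- identify the three integrals
    have hA : ∫⁻ z, f z ^ p ∂θ = transportCost p η := by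
      rw [transportCost, ← hθ0, lintegral_map hcostInt measurable_fst]
    have hB : ∫⁻ z, g z ^ p ∂θ = 2⁻¹ ^ p * transportCost p γ := by
      have hsplit : ∀ z, g z ^ p = 2⁻¹ ^ p * (‖z.1.1 - z.2.1‖₊ : ℝ≥0∞) ^ p := fun z =>
        ENNReal.mul_rpow_of_nonneg _ _ hp0.le
      simp_rw [hsplit]
      rw [lintegral_const_mul' _ _ (ENNReal.rpow_ne_top_of_nonneg hp0.le (by simp)),
        transportCost, ← hθ1, lintegral_map hcostInt hpr1]
    have hC : ∫⁻ z, h z ^ p ∂θ = 2⁻¹ ^ p * transportCost p γ' := by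
      have hsplit : ∀ z, h z ^ p = 2⁻¹ ^ p * (‖z.1.2 - z.2.2‖₊ : ℝ≥0∞) ^ p := fun z =>
        ENNReal.mul_rpow_of_nonneg _ _ hp0.le
      simp_rw [hsplit]
      rw [lintegral_const_mul' _ _ (ENNReal.rpow_ne_top_of_nonneg hp0.le (by simp)),
        transportCost, ← hθ2, lintegral_map hcostInt hpr2]
    have hhalfpow : ((2⁻¹ : ℝ≥0∞) ^ p) ^ (1/p) = 2⁻¹ := by
      rw [← ENNReal.rpow_mul, mul_one_div_cancel hp0.ne', ENNReal.rpow_one]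
    have hBrpow : (∫⁻ z, g z ^ p ∂θ) ^ (1/p) = 2⁻¹ * wasserstein p μ ν := by
      rw [hB, ENNReal.mul_rpow_of_nonneg _ _ hip.le, hhalfpow, hγopt, wasserstein]
    have hCrpow : (∫⁻ z, h z ^ p ∂θ) ^ (1/p) = 2⁻¹ * wasserstein p μ' ν' := by
      rw [hC, ENNReal.mul_rpow_of_nonneg _ _ hip.le, hhalfpow, hγ'opt, wasserstein]
    -- put everything together
    calc wasserstein p m m' ≤ transportCost p (θ.map F) ^ (1/p) := by
          rw [wasserstein]
          exact ENNReal.rpow_le_rpow (iInf₂_le _ hΘmem) hip.le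
      _ ≤ (∫⁻ z, (f z + (g z + h z)) ^ p ∂θ) ^ (1/p) := ENNReal.rpow_le_rpow step1 hip.le
      _ ≤ (∫⁻ z, f z ^ p ∂θ) ^ (1/p)
          + ((∫⁻ z, g z ^ p ∂θ) ^ (1/p) + (∫⁻ z, h z ^ p ∂θ) ^ (1/p)) := mink
      _ = transportCost p η ^ (1/p)
          + (2⁻¹ * wasserstein p μ ν + 2⁻¹ * wasserstein p μ' ν') := by
          rw [hA, hBrpow, hCrpow]
      _ ≤ transportCost p η ^ (1/p)
          + (2⁻¹ * ENNReal.ofReal δ + 2⁻¹ * ENNReal.ofReal δ) := by gcongr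
      _ = transportCost p η ^ (1/p) + ENNReal.ofReal δ := by
          rw [← add_mul, ENNReal.inv_two_add_inv_two, one_mul]
      _ = ENNReal.ofReal δ + transportCost p η ^ (1/p) := add_comm _ _
  -- conclude by taking the infimum over couplings of μ and μ'
  have h1 : wasserstein p m m'
      ≤ ⨅ η ∈ couplings μ μ', (ENNReal.ofReal δ + transportCost p η ^ (1/p)) :=
    le_iInf₂ key
  refine h1.trans ?_
  have h2 : (⨅ η ∈ couplings μ μ', (ENNReal.ofReal δ + transportCost p η ^ (1/p)))
      = ENNReal.ofReal δ + ⨅ η ∈ couplings μ μ', transportCost p η ^ (1/p) := by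
    simp_rw [← ENNReal.add_iInf]
  rw [h2, wasserstein, wassersteinPow, rpow_iInf₂_aux _ hip]

end
end

section
/- (One-step stability of the inverse multiscale transform.) Let p ≥ 1, let μ, ν ∈ P_p(ℝ^d), and let ψ, ψ̃ : ℝ^d → ℝ^d be Borel measurable maps with ∫‖ψ̃‖^p dν < ∞ such that the map I + ψ (where I is the identity of ℝ^d) is Lipschitz with Lipschitz constant at most C. Then W_p((I+ψ)_#μ, (I+ψ̃)_#ν) ≤ C·W_p(μ, ν) + （∫_{ℝ^d} ‖ψ(x) − ψ̃(x)‖^p dν(x)）^{1/p}. -/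
open MeasureTheory ENNReal NNReal ProbabilityTheory

noncomputable section

variable {E : Type*} [NormedAddCommGroup E] [MeasurableSpace E]

lemma rpow_iInf_aux {ι : Type*} [Nonempty ι] (f : ι → ℝ≥0∞) {q : ℝ} (hq : 0 < q) :
    (⨅ i, f i) ^ q = ⨅ i, (f i) ^ q := by
  exact (ENNReal.orderIsoRpow q hq).map_iInf f

/-- one-step stability of the inverse multiscale transform. -/
theorem one_step_stability {d : ℕ} (p : ℝ) (hp : 1 ≤ p)
    (μ ν : Measure (EuclideanSpace ℝ (Fin d))) (hμ : MemPp p μ) (hν : MemPp p ν)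
    (ψ ψt : EuclideanSpace ℝ (Fin d) → EuclideanSpace ℝ (Fin d))
    (hψ : Measurable ψ) (hψt : Measurable ψt)
    (hψtint : ∫⁻ x, (‖ψt x‖₊ : ℝ≥0∞) ^ p ∂ν < ∞)
    (C : ℝ≥0) (hC : LipschitzWith C (fun x => x + ψ x)) :
    wasserstein p (μ.map (fun x => x + ψ x)) (ν.map (fun x => x + ψt x)) ≤
      (C : ℝ≥0∞) * wasserstein p μ ν +
        (∫⁻ x, (‖ψ x - ψt x‖₊ : ℝ≥0∞) ^ p ∂ν) ^ (1 / p) := by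
  obtain ⟨hμP, hμint⟩ := hμ
  obtain ⟨hνP, hνint⟩ := hν
  have hp0 : (0:ℝ) < p := lt_of_lt_of_le one_pos hp
  have hq0 : (0:ℝ) < 1 / p := by positivity
  set F : EuclideanSpace ℝ (Fin d) → EuclideanSpace ℝ (Fin d) := fun x => x + ψ x with hF
  set Ft : EuclideanSpace ℝ (Fin d) → EuclideanSpace ℝ (Fin d) := fun x => x + ψt x with hFt
  have hFm : Measurable F := measurable_id.add hψ
  have hFtm : Measurable Ft := measurable_id.add hψt
  set D : ℝ≥0∞ := (∫⁻ x, (‖ψ x - ψt x‖₊ : ℝ≥0∞) ^ p ∂ν) ^ (1 / p) with hD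
  -- key estimate for each coupling
  have key : ∀ γ ∈ couplings μ ν,
      wasserstein p (μ.map F) (ν.map Ft) ≤ (C : ℝ≥0∞) * (transportCost p γ) ^ (1/p) + D := by
    intro γ hγ
    obtain ⟨hγ1, hγ2⟩ := hγ
    set T : (EuclideanSpace ℝ (Fin d)) × (EuclideanSpace ℝ (Fin d)) →
        (EuclideanSpace ℝ (Fin d)) × (EuclideanSpace ℝ (Fin d)) :=
      fun z => (F z.1, Ft z.2) with hT
    have hTm : Measurable T := (hFm.comp measurable_fst).prodMk (hFtm.comp measurable_snd)
    have hmem : γ.map T ∈ couplings (μ.map F) (ν.map Ft) := by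
      constructor
      · rw [Measure.map_map measurable_fst hTm, ← hγ1,
          Measure.map_map hFm measurable_fst]
        rfl
      · rw [Measure.map_map measurable_snd hTm, ← hγ2,
          Measure.map_map hFtm measurable_snd]
        rfl
    have step1 : wasserstein p (μ.map F) (ν.map Ft) ≤ (transportCost p (γ.map T)) ^ (1/p) := by
      apply ENNReal.rpow_le_rpow _ hq0.le
      exact iInf₂_le _ hmem
    -- compute the cost of the mapped coupling
    have hcost : transportCost p (γ.map T) = ∫⁻ z, (‖F z.1 - Ft z.2‖₊ : ℝ≥0∞) ^ p ∂γ := by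
      rw [transportCost, lintegral_map _ hTm]
      exact ((measurable_fst.sub measurable_snd).nnnorm.coe_nnreal_ennreal).pow_const p
    set f : (EuclideanSpace ℝ (Fin d)) × (EuclideanSpace ℝ (Fin d)) → ℝ≥0∞ :=
      fun z => (‖F z.1 - F z.2‖₊ : ℝ≥0∞) with hf
    set g : (EuclideanSpace ℝ (Fin d)) × (EuclideanSpace ℝ (Fin d)) → ℝ≥0∞ :=
      fun z => (‖ψ z.2 - ψt z.2‖₊ : ℝ≥0∞) with hg
    have hfm : Measurable f :=
      (((hFm.comp measurable_fst).sub (hFm.comp measurable_snd)).nnnorm).coe_nnreal_ennreal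
    have hgm : Measurable g :=
      (((hψ.comp measurable_snd).sub (hψt.comp measurable_snd)).nnnorm).coe_nnreal_ennreal
    have hptwise : ∀ z, (‖F z.1 - Ft z.2‖₊ : ℝ≥0∞) ^ p ≤ (f z + g z) ^ p := by
      intro z
      apply ENNReal.rpow_le_rpow _ hp0.le
      have : F z.1 - Ft z.2 = (F z.1 - F z.2) + (ψ z.2 - ψt z.2) := by
        simp only [hF, hFt]
        abel
      rw [this]
      calc (‖(F z.1 - F z.2) + (ψ z.2 - ψt z.2)‖₊ : ℝ≥0∞)
          ≤ ((‖F z.1 - F z.2‖₊ + ‖ψ z.2 - ψt z.2‖₊ : ℝ≥0) : ℝ≥0∞) := by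
            exact_mod_cast ENNReal.coe_le_coe.2 (nnnorm_add_le _ _)
        _ = f z + g z := by rw [ENNReal.coe_add]
    have step2 : (transportCost p (γ.map T)) ^ (1/p) ≤
        (∫⁻ z, (f z + g z) ^ p ∂γ) ^ (1/p) := by
      apply ENNReal.rpow_le_rpow _ hq0.le
      rw [hcost]
      exact lintegral_mono hptwise
    have step3 : (∫⁻ z, (f z + g z) ^ p ∂γ) ^ (1/p) ≤
        (∫⁻ z, f z ^ p ∂γ) ^ (1/p) + (∫⁻ z, g z ^ p ∂γ) ^ (1/p) :=
      ENNReal.lintegral_Lp_add_le hfm.aemeasurable hgm.aemeasurable hp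
    -- bound the f-term via the Lipschitz property
    have stepf : (∫⁻ z, f z ^ p ∂γ) ^ (1/p) ≤ (C : ℝ≥0∞) * (transportCost p γ) ^ (1/p) := by
      have hfb : ∀ z, f z ^ p ≤ (C : ℝ≥0∞) ^ p * (‖z.1 - z.2‖₊ : ℝ≥0∞) ^ p := by
        intro z
        rw [← ENNReal.mul_rpow_of_nonneg _ _ hp0.le]
        apply ENNReal.rpow_le_rpow _ hp0.le
        have := hC.nndist_le z.1 z.2
        rw [← ENNReal.coe_mul]
        apply ENNReal.coe_le_coe.2
        simpa [nndist_eq_nnnorm] using this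
      calc (∫⁻ z, f z ^ p ∂γ) ^ (1/p)
          ≤ (∫⁻ z, (C : ℝ≥0∞) ^ p * (‖z.1 - z.2‖₊ : ℝ≥0∞) ^ p ∂γ) ^ (1/p) :=
            ENNReal.rpow_le_rpow (lintegral_mono hfb) hq0.le
        _ = ((C : ℝ≥0∞) ^ p * transportCost p γ) ^ (1/p) := by
            rw [lintegral_const_mul]
            · rfl
            · exact ((measurable_fst.sub measurable_snd).nnnorm.coe_nnreal_ennreal).pow_const p
        _ = (C : ℝ≥0∞) * (transportCost p γ) ^ (1/p) := by
            rw [ENNReal.mul_rpow_of_nonneg _ _ hq0.le, ← ENNReal.rpow_mul,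
              mul_one_div, div_self hp0.ne', ENNReal.rpow_one]
    -- the g-term equals D
    have stepg : (∫⁻ z, g z ^ p ∂γ) ^ (1/p) = D := by
      rw [hD]
      congr 1
      have : (∫⁻ x, (‖ψ x - ψt x‖₊ : ℝ≥0∞) ^ p ∂ν)
          = ∫⁻ x, (‖ψ x - ψt x‖₊ : ℝ≥0∞) ^ p ∂(γ.map Prod.snd) := by rw [hγ2]
      rw [this, lintegral_map _ measurable_snd]
      exact ((hψ.sub hψt).nnnorm.coe_nnreal_ennreal).pow_const p
    calc wasserstein p (μ.map F) (ν.map Ft)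
        ≤ (transportCost p (γ.map T)) ^ (1/p) := step1
      _ ≤ (∫⁻ z, (f z + g z) ^ p ∂γ) ^ (1/p) := step2
      _ ≤ (∫⁻ z, f z ^ p ∂γ) ^ (1/p) + (∫⁻ z, g z ^ p ∂γ) ^ (1/p) := step3
      _ ≤ (C : ℝ≥0∞) * (transportCost p γ) ^ (1/p) + D := by
          rw [stepg]; exact add_le_add_left stepf _
  -- couplings are nonempty
  have hne : (couplings μ ν).Nonempty := by
    refine ⟨μ.prod ν, ?_, ?_⟩
    · rw [Measure.map_fst_prod]; simp
    · rw [Measure.map_snd_prod]; simp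
  haveI : Nonempty (couplings μ ν) := hne.to_subtype
  -- conclude
  have h1 : wasserstein p (μ.map F) (ν.map Ft) ≤
      ⨅ γ : couplings μ ν, ((C : ℝ≥0∞) * (transportCost p γ.1) ^ (1/p) + D) :=
    le_iInf fun γ => key γ.1 γ.2
  refine h1.trans ?_
  rw [← ENNReal.iInf_add, ← ENNReal.mul_iInf (by simp), ← rpow_iInf_aux _ hq0]
  have : wasserstein p μ ν = (⨅ γ : couplings μ ν, transportCost p γ.1) ^ (1/p) := by
    rw [wasserstein, wassersteinPow, iInf_subtype]
  rw [this]
end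
end

section
/- (Theorem 5.4, stability of the inverse multiscale transform.) Let p ≥ 1, J ∈ ℕ, and K, C > 0. Let S be a map sending sequences (indexed by ℤ) of measures in P_p(ℝ^d) to sequences of measures in P_p(ℝ^d) that is stable with constant K: for all sequences μ, ν, sup_{i∈ℤ} W_p((Sμ)_i, (Sν)_i) ≤ K · sup_{i∈ℤ} W_p(μ_i, ν_i). Let μ^{(0)}, μ̃^{(0)} be sequences in P_p(ℝ^d) and, for each ℓ = 1,…,J and i ∈ ℤ, let ψ^{(ℓ)}_i, ψ̃^{(ℓ)}_i : ℝ^d → ℝ^d be Borel measurable maps such that each map I + ψ^{(ℓ)}_i is Lipschitz with Lipschitz constant at most C. Define recursively μ^{(ℓ)}_i = (I + ψ^{(ℓ)}_i)_#(Sμ^{(ℓ−1)})_i and μ̃^{(ℓ)}_i = (I + ψ̃^{(ℓ)}_i)_#(Sμ̃^{(ℓ−1)})_i. Then sup_{i} W_p(μ^{(J)}_i, μ̃^{(J)}_i) ≤ L·( sup_i W_p(μ^{(0)}_i, μ̃^{(0)}_i) + Σ_{ℓ=1}^{J} sup_i (∫‖ψ^{(ℓ)}_i − ψ̃^{(ℓ)}_i‖^p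 d(Sμ̃^{(ℓ−1)})_i)^{1/p} ), where L = 1 if KC ≤ 1 and L = (KC)^J otherwise. -/
open MeasureTheory ENNReal NNReal ProbabilityTheory

noncomputable section

variable {E : Type*} [NormedAddCommGroup E] [MeasurableSpace E]

lemma iInf_rpow_aux {ι : Sort*} (f : ι → ℝ≥0∞) {c : ℝ} (hc : 0 < c) :
    (⨅ i, f i) ^ c = ⨅ i, f i ^ c := by
  exact OrderIso.map_iInf (ENNReal.orderIsoRpow c hc) f

variable [BorelSpace E] [SecondCountableTopology E]

lemma step_bound (p : ℝ) (hp : 1 ≤ p) (C : ℝ≥0) (hC : 0 < C)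
    (α β : Measure E) (f g : E → E) (hf : Measurable f) (hg : Measurable g)
    (hLipf : LipschitzWith C (fun x => x + f x)) :
    wasserstein p (α.map (fun x => x + f x)) (β.map (fun x => x + g x)) ≤
      C * wasserstein p α β + (∫⁻ x, (‖f x - g x‖₊ : ℝ≥0∞) ^ p ∂β) ^ (1 / p) := by
  have hp0 : (0:ℝ) < p := lt_of_lt_of_le one_pos hp
  have hp0' : (0:ℝ) < 1 / p := by positivity
  set D : ℝ≥0∞ := (∫⁻ x, (‖f x - g x‖₊ : ℝ≥0∞) ^ p ∂β) ^ (1 / p) with hD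
  set F : E → E := fun x => x + f x with hF
  set G : E → E := fun x => x + g x with hG
  have hFm : Measurable F := measurable_id.add hf
  have hGm : Measurable G := measurable_id.add hg
  -- key pointwise estimate for each coupling
  have key : ∀ γ ∈ couplings α β,
      wasserstein p (α.map F) (β.map G) ≤ C * (transportCost p γ) ^ (1/p) + D := by
    rintro γ ⟨hγ1, hγ2⟩
    set T : E × E → E × E := fun z => (F z.1, G z.2) with hT
    have hTm : Measurable T := (hFm.comp measurable_fst).prodMk (hGm.comp measurable_snd)
    have hmem : γ.map T ∈ couplings (α.map F) (β.map G) := by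
      constructor
      · rw [Measure.map_map measurable_fst hTm, ← hγ1,
          Measure.map_map hFm measurable_fst]
        rfl
      · rw [Measure.map_map measurable_snd hTm, ← hγ2,
          Measure.map_map hGm measurable_snd]
        rfl
    have hcost_meas : Measurable fun z : E × E => (‖z.1 - z.2‖₊ : ℝ≥0∞) ^ p :=
      ((measurable_fst.sub measurable_snd).nnnorm.coe_nnreal_ennreal).pow_const p
    have h1m : Measurable fun z : E × E => (C : ℝ≥0∞) * (‖z.1 - z.2‖₊ : ℝ≥0∞) :=
      ((measurable_fst.sub measurable_snd).nnnorm.coe_nnreal_ennreal).const_mul _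
    have h2m : Measurable fun z : E × E => (‖f z.2 - g z.2‖₊ : ℝ≥0∞) :=
      (((hf.comp measurable_snd).sub (hg.comp measurable_snd)).nnnorm.coe_nnreal_ennreal)
    have hptwise : ∀ z : E × E,
        (‖F z.1 - G z.2‖₊ : ℝ≥0∞) ^ p ≤
          ((C : ℝ≥0∞) * ‖z.1 - z.2‖₊ + ‖f z.2 - g z.2‖₊) ^ p := by
      intro z
      refine ENNReal.rpow_le_rpow ?_ hp0.le
      have h1 : (‖F z.1 - F z.2‖₊ : ℝ≥0∞) ≤ (C : ℝ≥0∞) * ‖z.1 - z.2‖₊ := by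
        have := hLipf z.1 z.2
        simpa [edist_eq_enorm_sub, enorm_eq_nnnorm] using this
      have h2 : F z.2 - G z.2 = f z.2 - g z.2 := by
        simp [hF, hG, add_sub_add_left_eq_sub]
      calc (‖F z.1 - G z.2‖₊ : ℝ≥0∞)
          = (‖(F z.1 - F z.2) + (F z.2 - G z.2)‖₊ : ℝ≥0∞) := by
            rw [sub_add_sub_cancel]
        _ ≤ (‖F z.1 - F z.2‖₊ : ℝ≥0∞) + (‖F z.2 - G z.2‖₊ : ℝ≥0∞) := by
            exact_mod_cast nnnorm_add_le _ _
        _ ≤ (C : ℝ≥0∞) * ‖z.1 - z.2‖₊ + ‖f z.2 - g z.2‖₊ := by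
            rw [h2]; exact add_le_add_left h1 _
    have hWle : wassersteinPow p (α.map F) (β.map G) ≤ transportCost p (γ.map T) :=
      iInf₂_le _ hmem
    have hcostT : transportCost p (γ.map T) =
        ∫⁻ z, (‖F z.1 - G z.2‖₊ : ℝ≥0∞) ^ p ∂γ := by
      unfold transportCost
      rw [lintegral_map hcost_meas hTm]
    have hmink :
        (∫⁻ z, (((C : ℝ≥0∞) * ‖z.1 - z.2‖₊ + ‖f z.2 - g z.2‖₊) : ℝ≥0∞) ^ p ∂γ) ^ (1/p) ≤
          (∫⁻ z, ((C : ℝ≥0∞) * (‖z.1 - z.2‖₊ : ℝ≥0∞)) ^ p ∂γ) ^ (1/p) +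
          (∫⁻ z, ((‖f z.2 - g z.2‖₊ : ℝ≥0∞)) ^ p ∂γ) ^ (1/p) :=
      ENNReal.lintegral_Lp_add_le h1m.aemeasurable h2m.aemeasurable hp
    have heq1 : (∫⁻ z, ((C : ℝ≥0∞) * (‖z.1 - z.2‖₊ : ℝ≥0∞)) ^ p ∂γ) ^ (1/p) =
        C * (transportCost p γ) ^ (1/p) := by
      have : ∀ z : E × E, ((C : ℝ≥0∞) * (‖z.1 - z.2‖₊ : ℝ≥0∞)) ^ p =
          (C : ℝ≥0∞) ^ p * (‖z.1 - z.2‖₊ : ℝ≥0∞) ^ p := fun z =>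
        ENNReal.mul_rpow_of_nonneg _ _ hp0.le
      simp_rw [this]
      rw [lintegral_const_mul _ hcost_meas]
      rw [ENNReal.mul_rpow_of_nonneg _ _ hp0'.le, ← ENNReal.rpow_mul,
        mul_one_div_cancel hp0.ne', ENNReal.rpow_one]
      rfl
    have heq2 : (∫⁻ z, ((‖f z.2 - g z.2‖₊ : ℝ≥0∞)) ^ p ∂γ) ^ (1/p) = D := by
      rw [hD, ← hγ2, lintegral_map (f := fun x => (‖f x - g x‖₊ : ℝ≥0∞) ^ p)
        (((hf.sub hg).nnnorm.coe_nnreal_ennreal).pow_const p) measurable_snd]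
    calc wasserstein p (α.map F) (β.map G)
        ≤ (transportCost p (γ.map T)) ^ (1/p) :=
          ENNReal.rpow_le_rpow hWle hp0'.le
      _ ≤ (∫⁻ z, (((C : ℝ≥0∞) * ‖z.1 - z.2‖₊ + ‖f z.2 - g z.2‖₊) : ℝ≥0∞) ^ p ∂γ) ^ (1/p) := by
          rw [hcostT]
          exact ENNReal.rpow_le_rpow (lintegral_mono hptwise) hp0'.le
      _ ≤ _ + _ := hmink
      _ = C * (transportCost p γ) ^ (1/p) + D := by rw [heq1, heq2]
  -- take infimum over couplings
  have : wasserstein p (α.map F) (β.map G) ≤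
      ⨅ γ : couplings α β, (C * (transportCost p (γ : Measure (E × E))) ^ (1/p) + D) := by
    exact le_iInf fun γ => key γ γ.2
  refine this.trans ?_
  have h1 : (⨅ γ : couplings α β, (C * (transportCost p (γ : Measure (E × E))) ^ (1/p) + D))
      = (⨅ γ : couplings α β, (C : ℝ≥0∞) * (transportCost p (γ : Measure (E × E))) ^ (1/p)) + D := by
    rw [ENNReal.iInf_add]
  have h2 : (⨅ γ : couplings α β, (C : ℝ≥0∞) * (transportCost p (γ : Measure (E × E))) ^ (1/p))
      = (C : ℝ≥0∞) * ⨅ γ : couplings α β, (transportCost p (γ : Measure (E × E))) ^ (1/p) := by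
    rw [ENNReal.mul_iInf_of_ne (by exact_mod_cast hC.ne') ENNReal.coe_ne_top]
  have h3 : (⨅ γ : couplings α β, (transportCost p (γ : Measure (E × E))) ^ (1/p))
      = wasserstein p α β := by
    rw [wasserstein, wassersteinPow, iInf_subtype', iInf_rpow_aux _ hp0']
  rw [h1, h2, h3]

/-- Theorem 5.4, stability of the inverse multiscale transform. -/
theorem inverse_multiscale_stability {d : ℕ} (p : ℝ) (hp : 1 ≤ p) (J : ℕ)
    (K C : ℝ≥0) (hK : 0 < K) (hC : 0 < C)
    (S : (ℤ → Measure (EuclideanSpace ℝ (Fin d))) → (ℤ → Measure (EuclideanSpace ℝ (Fin d))))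
    (hSPp : ∀ μ : ℤ → Measure (EuclideanSpace ℝ (Fin d)),
      (∀ i, MemPp p (μ i)) → ∀ i, MemPp p (S μ i))
    (hS : ∀ μ ν : ℤ → Measure (EuclideanSpace ℝ (Fin d)),
      (⨆ i, wasserstein p (S μ i) (S ν i)) ≤ (K : ℝ≥0∞) * ⨆ i, wasserstein p (μ i) (ν i))
    (μ0 ν0 : ℤ → Measure (EuclideanSpace ℝ (Fin d)))
    (hμ0 : ∀ i, MemPp p (μ0 i)) (hν0 : ∀ i, MemPp p (ν0 i))
    (ψ ψt : ℕ → ℤ → EuclideanSpace ℝ (Fin d) → EuclideanSpace ℝ (Fin d))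
    (hψm : ∀ ℓ i, Measurable (ψ ℓ i)) (hψtm : ∀ ℓ i, Measurable (ψt ℓ i))
    (hLip : ∀ ℓ i, LipschitzWith C (fun x => x + ψ ℓ i x))
    (μseq νseq : ℕ → ℤ → Measure (EuclideanSpace ℝ (Fin d)))
    (hμinit : μseq 0 = μ0) (hνinit : νseq 0 = ν0)
    (hμrec : ∀ ℓ < J, ∀ i, μseq (ℓ+1) i = ((S (μseq ℓ)) i).map (fun x => x + ψ (ℓ+1) i x))
    (hνrec : ∀ ℓ < J, ∀ i, νseq (ℓ+1) i = ((S (νseq ℓ)) i).map (fun x => x + ψt (ℓ+1) i x)) :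
    (⨆ i, wasserstein p (μseq J i) (νseq J i)) ≤
      (if K * C ≤ 1 then 1 else ((K * C : ℝ≥0) : ℝ≥0∞) ^ J) *
        ((⨆ i, wasserstein p (μ0 i) (ν0 i)) +
          ∑ ℓ ∈ Finset.range J, ⨆ i,
            (∫⁻ x, (‖ψ (ℓ+1) i x - ψt (ℓ+1) i x‖₊ : ℝ≥0∞) ^ p ∂((S (νseq ℓ)) i)) ^ (1 / p)) := by
  have hp0 : (0:ℝ) < p := lt_of_lt_of_le one_pos hp
  let a : ℕ → ℝ≥0∞ := fun ℓ => ⨆ i, wasserstein p (μseq ℓ i) (νseq ℓ i)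
  let Dl : ℕ → ℝ≥0∞ := fun ℓ => ⨆ i,
      (∫⁻ x, (‖ψ (ℓ+1) i x - ψt (ℓ+1) i x‖₊ : ℝ≥0∞) ^ p ∂((S (νseq ℓ)) i)) ^ (1 / p)
  let L : ℝ≥0∞ := max 1 ((K * C : ℝ≥0) : ℝ≥0∞)
  have hL1 : (1:ℝ≥0∞) ≤ L := le_max_left _ _
  have hKCL : ((K * C : ℝ≥0) : ℝ≥0∞) ≤ L := le_max_right _ _
  have step : ∀ ℓ < J, a (ℓ+1) ≤ ((K * C : ℝ≥0) : ℝ≥0∞) * a ℓ + Dl ℓ := by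
    intro ℓ hℓ
    refine iSup_le fun i => ?_
    rw [hμrec ℓ hℓ i, hνrec ℓ hℓ i]
    calc wasserstein p (((S (μseq ℓ)) i).map (fun x => x + ψ (ℓ+1) i x))
          (((S (νseq ℓ)) i).map (fun x => x + ψt (ℓ+1) i x))
        ≤ C * wasserstein p (S (μseq ℓ) i) (S (νseq ℓ) i) +
            (∫⁻ x, (‖ψ (ℓ+1) i x - ψt (ℓ+1) i x‖₊ : ℝ≥0∞) ^ p ∂((S (νseq ℓ)) i)) ^ (1/p) :=
          step_bound p hp C hC _ _ _ _ (hψm _ i) (hψtm _ i) (hLip _ i)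
      _ ≤ C * (⨆ j, wasserstein p (S (μseq ℓ) j) (S (νseq ℓ) j)) + Dl ℓ :=
          add_le_add (mul_le_mul_right
              (le_iSup (fun j => wasserstein p (S (μseq ℓ) j) (S (νseq ℓ) j)) i) _)
            (le_iSup (fun j =>
              (∫⁻ x, (‖ψ (ℓ+1) j x - ψt (ℓ+1) j x‖₊ : ℝ≥0∞) ^ p ∂((S (νseq ℓ)) j)) ^ (1/p)) i)
      _ ≤ C * ((K : ℝ≥0∞) * a ℓ) + Dl ℓ :=
          add_le_add_left (mul_le_mul_right (hS _ _) _) _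
      _ = ((K * C : ℝ≥0) : ℝ≥0∞) * a ℓ + Dl ℓ := by
          rw [ENNReal.coe_mul]; ring
  have key : ∀ ℓ, ℓ ≤ J → a ℓ ≤ L ^ ℓ * (a 0 + ∑ j ∈ Finset.range ℓ, Dl j) := by
    intro ℓ
    induction ℓ with
    | zero => intro _; simp
    | succ n ih =>
      intro hn
      have ihn := ih (Nat.le_of_succ_le hn)
      calc a (n+1) ≤ ((K * C : ℝ≥0) : ℝ≥0∞) * a n + Dl n := step n hn
        _ ≤ L * (L ^ n * (a 0 + ∑ j ∈ Finset.range n, Dl j)) + L ^ (n+1) * Dl n :=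
            add_le_add (mul_le_mul' hKCL ihn)
              (le_mul_of_one_le_left' (one_le_pow_of_one_le' hL1 _))
        _ = L ^ (n+1) * (a 0 + ∑ j ∈ Finset.range (n+1), Dl j) := by
            rw [Finset.sum_range_succ, pow_succ]; ring
  have hfinal := key J le_rfl
  have ha0 : a 0 = ⨆ i, wasserstein p (μ0 i) (ν0 i) := by
    simp only [a, hμinit, hνinit]
  have hLJ : L ^ J = (if K * C ≤ 1 then 1 else ((K * C : ℝ≥0) : ℝ≥0∞) ^ J) := by
    by_cases h : K * C ≤ 1
    · have h1 : ((K * C : ℝ≥0) : ℝ≥0∞) ≤ 1 := by exact_mod_cast h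
      rw [if_pos h]
      show (max 1 ((K * C : ℝ≥0) : ℝ≥0∞)) ^ J = 1
      rw [max_eq_left h1, one_pow]
    · have h1 : (1:ℝ≥0∞) ≤ ((K * C : ℝ≥0) : ℝ≥0∞) := by
        exact_mod_cast (not_le.1 h).le
      rw [if_neg h]
      show (max 1 ((K * C : ℝ≥0) : ℝ≥0∞)) ^ J = _
      rw [max_eq_right h1]
  refine le_trans hfinal ?_
  rw [ha0, hLJ]
end
end

section
/- (Optimal map between one-dimensional Gaussians.) Let m_0, m_1 ∈ ℝ and σ_0, σ_1 > 0, and define T : ℝ → ℝ by T(x) = m_1 + √(σ_1/σ_0)·(x − m_0). Then: (i) T_# N(m_0, σ_0) = N(m_1, σ_1); (ii) ∫_ℝ (x − T(x))^2 dN(m_0, σ_0)(x) = (m_0 − m_1)^2 + (√σ_0 − √σ_1)^2; consequently the coupling (I, T)_# N(m_0, σ_0) ∈ Π(N(m_0,σ_0), N(m_1,σ_1)) attains the infimum defining W_2(N(m_0,σ_0), N(m_1,σ_1))^2. -/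
open MeasureTheory ENNReal NNReal ProbabilityTheory

noncomputable section

variable {E : Type*} [NormedAddCommGroup E] [MeasurableSpace E]

namespace GaussianOptAux

open Real Filter Asymptotics

lemma integrable_id_mul_exp {b : ℝ} (hb : 0 < b) :
    Integrable (fun x : ℝ => x * rexp (-b * x ^ 2)) := by
  have := integrable_rpow_mul_exp_neg_mul_sq hb (s := 1) (by norm_num)
  simpa using this

lemma integrable_sq_mul_exp {b : ℝ} (hb : 0 < b) :
    Integrable (fun x : ℝ => x ^ 2 * rexp (-b * x ^ 2)) := by
  have := integrable_rpow_mul_exp_neg_mul_sq hb (s := 2) (by norm_num)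
  have h2 : ∀ x : ℝ, x ^ (2 : ℝ) = x ^ 2 := fun x => by
    rw [show (2:ℝ) = ((2:ℕ):ℝ) by norm_num, Real.rpow_natCast]
  simpa only [h2] using this

lemma tendsto_id_mul_exp_atTop {b : ℝ} (hb : 0 < b) :
    Tendsto (fun x : ℝ => x * rexp (-b * x ^ 2)) atTop (nhds 0) := by
  have h := (rpow_mul_exp_neg_mul_sq_isLittleO_exp_neg hb 1).isBigO.trans_tendsto ?_
  · simpa using h
  · have : Tendsto (fun x : ℝ => -(1/2) * x) atTop atBot := by
      apply Tendsto.const_mul_atTop_of_neg (by norm_num) tendsto_id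
    exact Real.tendsto_exp_atBot.comp this

lemma integral_sq_mul_exp {b : ℝ} (hb : 0 < b) :
    ∫ x : ℝ, x ^ 2 * rexp (-b * x ^ 2) = Real.sqrt (π / b) / (2 * b) := by
  have hd : ∀ x : ℝ, HasDerivAt (fun x : ℝ => x * rexp (-b * x ^ 2))
      (rexp (-b * x ^ 2) - 2 * b * (x ^ 2 * rexp (-b * x ^ 2))) x := by
    intro x
    have h1 : HasDerivAt (fun x : ℝ => -b * x ^ 2) (-b * (2 * x)) x := by
      simpa using ((hasDerivAt_pow 2 x).const_mul (-b))
    have := (hasDerivAt_id x).mul h1.exp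
    refine this.congr_deriv ?_
    simp only [id_eq]
    ring
  have hint : Integrable (fun x : ℝ => rexp (-b * x ^ 2) - 2 * b * (x ^ 2 * rexp (-b * x ^ 2))) :=
    (integrable_exp_neg_mul_sq hb).sub ((integrable_sq_mul_exp hb).const_mul _)
  have htop := tendsto_id_mul_exp_atTop hb
  have hbot : Tendsto (fun x : ℝ => x * rexp (-b * x ^ 2)) atBot (nhds 0) := by
    have := (htop.comp tendsto_neg_atBot_atTop).neg
    simpa using this
  have h0 := integral_of_hasDerivAt_of_tendsto hd hint hbot htop
  rw [sub_zero, integral_sub (integrable_exp_neg_mul_sq hb)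
    ((integrable_sq_mul_exp hb).const_mul _), integral_const_mul, integral_gaussian,
    sub_eq_zero] at h0
  field_simp at h0 ⊢
  linarith

lemma gaussianReal_withDensity (m : ℝ) {v : ℝ≥0} (hv : v ≠ 0) :
    gaussianReal m v
      = volume.withDensity (fun x => ((gaussianPDFReal m v x).toNNReal : ℝ≥0∞)) := by
  rw [gaussianReal_of_var_ne_zero _ hv, gaussianPDF_def]
  rfl

lemma integral_gaussianReal_eq (m : ℝ) {v : ℝ≥0} (hv : v ≠ 0) (g : ℝ → ℝ) :
    ∫ x, g x ∂(gaussianReal m v) = ∫ x, gaussianPDFReal m v x * g x := by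
  rw [gaussianReal_withDensity m hv,
    integral_withDensity_eq_integral_smul
      ((measurable_gaussianPDFReal m v).real_toNNReal) g]
  congr 1
  ext x
  rw [NNReal.smul_def, Real.coe_toNNReal _ (gaussianPDFReal_nonneg m v x), smul_eq_mul]

lemma integrable_gaussianReal_iff (m : ℝ) {v : ℝ≥0} (hv : v ≠ 0) (g : ℝ → ℝ) :
    Integrable g (gaussianReal m v) ↔ Integrable (fun x => gaussianPDFReal m v x * g x) := by
  rw [gaussianReal_withDensity m hv,
    integrable_withDensity_iff_integrable_smul
      ((measurable_gaussianPDFReal m v).real_toNNReal)]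
  have heq : (fun x => (gaussianPDFReal m v x).toNNReal • g x)
      = fun x => gaussianPDFReal m v x * g x := by
    funext x
    rw [NNReal.smul_def, Real.coe_toNNReal _ (gaussianPDFReal_nonneg m v x), smul_eq_mul]
  rw [heq]

lemma gaussianPDFReal_zero_mean {v : ℝ≥0} :
    gaussianPDFReal 0 v = fun y : ℝ =>
      (Real.sqrt (2 * π * v))⁻¹ * rexp (-(2 * (v : ℝ))⁻¹ * y ^ 2) := by
  funext y
  rw [gaussianPDFReal, sub_zero]
  congr 1
  rw [neg_div, div_eq_mul_inv]
  ring

lemma shift_integral (m : ℝ) (v : ℝ≥0) (g : ℝ → ℝ) :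
    ∫ x, gaussianPDFReal m v x * g x = ∫ y, gaussianPDFReal 0 v y * g (y + m) := by
  rw [← integral_sub_right_eq_self (fun y => gaussianPDFReal 0 v y * g (y + m)) m]
  congr 1
  funext x
  rw [gaussianPDFReal_sub, zero_add, sub_add_cancel]

lemma shift_integrable {m : ℝ} {v : ℝ≥0} {g : ℝ → ℝ}
    (h : Integrable (fun y => gaussianPDFReal 0 v y * g (y + m))) :
    Integrable (fun x => gaussianPDFReal m v x * g x) := by
  have := h.comp_sub_right m
  refine this.congr (Filter.Eventually.of_forall fun x => ?_)
  simp only []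
  rw [gaussianPDFReal_sub, zero_add, sub_add_cancel]

section moments0

variable {v : ℝ≥0} (hv : v ≠ 0)
include hv

lemma hv_pos : 0 < (v : ℝ) := by
  exact_mod_cast pos_iff_ne_zero.mpr hv

lemma hb_pos : 0 < (2 * (v : ℝ))⁻¹ := by
  have := hv_pos hv; positivity

lemma pdf0_norm : (Real.sqrt (2 * π * v))⁻¹ * Real.sqrt (π / (2 * (v : ℝ))⁻¹) = 1 := by
  have h1 := integral_gaussianPDFReal_eq_one 0 hv
  rw [gaussianPDFReal_zero_mean, integral_const_mul, integral_gaussian] at h1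
  exact h1

lemma integrable_pdf0_mul_id : Integrable (fun y : ℝ => gaussianPDFReal 0 v y * y) := by
  rw [gaussianPDFReal_zero_mean]
  refine ((integrable_id_mul_exp (hb_pos hv)).const_mul ((Real.sqrt (2 * π * v))⁻¹)).congr
    (Filter.Eventually.of_forall fun y => ?_)
  ring

lemma integrable_pdf0_mul_sq : Integrable (fun y : ℝ => gaussianPDFReal 0 v y * y ^ 2) := by
  rw [gaussianPDFReal_zero_mean]
  refine ((integrable_sq_mul_exp (hb_pos hv)).const_mul ((Real.sqrt (2 * π * v))⁻¹)).congr
    (Filter.Eventually.of_forall fun y => ?_)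
  ring

omit hv in
lemma integral_pdf0_mul_id : ∫ y : ℝ, gaussianPDFReal 0 v y * y = 0 := by
  have h := integral_neg_eq_self (fun y : ℝ => gaussianPDFReal 0 v y * y) volume
  have heq : (fun y : ℝ => gaussianPDFReal 0 v (-y) * (-y))
      = fun y : ℝ => -(gaussianPDFReal 0 v y * y) := by
    funext y
    rw [gaussianPDFReal_zero_mean]
    simp only [neg_sq]
    ring
  rw [heq, integral_neg] at h
  linarith

lemma integral_pdf0_mul_sq : ∫ y : ℝ, gaussianPDFReal 0 v y * y ^ 2 = v := by
  rw [gaussianPDFReal_zero_mean]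
  have heq : (fun y : ℝ => (Real.sqrt (2 * π * v))⁻¹ * rexp (-(2 * (v : ℝ))⁻¹ * y ^ 2) * y ^ 2)
      = fun y : ℝ => (Real.sqrt (2 * π * v))⁻¹ * (y ^ 2 * rexp (-(2 * (v : ℝ))⁻¹ * y ^ 2)) := by
    funext y; ring
  rw [heq, integral_const_mul, integral_sq_mul_exp (hb_pos hv)]
  have hn := pdf0_norm hv
  have h2v : 0 < (2 * (v:ℝ)) := by have := hv_pos hv; positivity
  rw [div_eq_mul_inv, ← mul_assoc, hn, one_mul]
  rw [mul_inv, inv_inv]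
  field_simp

end moments0

section moments

variable {v : ℝ≥0} (hv : v ≠ 0) (m : ℝ)
include hv

lemma integrable_id_gaussianReal : Integrable (fun x : ℝ => x) (gaussianReal m v) := by
  rw [integrable_gaussianReal_iff m hv]
  refine shift_integrable (g := fun x => x) ?_
  have heq : (fun y : ℝ => gaussianPDFReal 0 v y * (y + m))
      = fun y : ℝ => gaussianPDFReal 0 v y * y + m * gaussianPDFReal 0 v y := by
    funext y; ring
  rw [heq]
  exact (integrable_pdf0_mul_id hv).add ((integrable_gaussianPDFReal 0 v).const_mul m)

lemma integrable_sq_gaussianReal : Integrable (fun x : ℝ => x ^ 2) (gaussianReal m v) := by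
  rw [integrable_gaussianReal_iff m hv]
  refine shift_integrable (g := fun x => x ^ 2) ?_
  have heq : (fun y : ℝ => gaussianPDFReal 0 v y * (y + m) ^ 2)
      = fun y : ℝ => gaussianPDFReal 0 v y * y ^ 2
          + ((2 * m) * (gaussianPDFReal 0 v y * y) + m ^ 2 * gaussianPDFReal 0 v y) := by
    funext y; ring
  rw [heq]
  exact (integrable_pdf0_mul_sq hv).add
    (((integrable_pdf0_mul_id hv).const_mul _).add
      ((integrable_gaussianPDFReal 0 v).const_mul _))

lemma integral_id_gaussianReal : ∫ x, x ∂(gaussianReal m v) = m := by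
  rw [integral_gaussianReal_eq m hv, shift_integral]
  have heq : (fun y : ℝ => gaussianPDFReal 0 v y * (y + m))
      = fun y : ℝ => gaussianPDFReal 0 v y * y + m * gaussianPDFReal 0 v y := by
    funext y; ring
  rw [heq, integral_add (integrable_pdf0_mul_id hv)
    ((integrable_gaussianPDFReal 0 v).const_mul m), integral_pdf0_mul_id,
    integral_const_mul, integral_gaussianPDFReal_eq_one 0 hv]
  ring

lemma integral_sq_gaussianReal : ∫ x, x ^ 2 ∂(gaussianReal m v) = v + m ^ 2 := by
  rw [integral_gaussianReal_eq m hv, shift_integral]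
  have heq : (fun y : ℝ => gaussianPDFReal 0 v y * (y + m) ^ 2)
      = fun y : ℝ => gaussianPDFReal 0 v y * y ^ 2
          + ((2 * m) * (gaussianPDFReal 0 v y * y) + m ^ 2 * gaussianPDFReal 0 v y) := by
    funext y; ring
  rw [heq]
  have hB : Integrable (fun y : ℝ =>
      2 * m * (gaussianPDFReal 0 v y * y) + m ^ 2 * gaussianPDFReal 0 v y) := by
    exact ((integrable_pdf0_mul_id hv).const_mul _).add
      ((integrable_gaussianPDFReal 0 v).const_mul _)
  rw [integral_add (integrable_pdf0_mul_sq hv) hB]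
  rw [integral_add ((integrable_pdf0_mul_id hv).const_mul _)
      ((integrable_gaussianPDFReal 0 v).const_mul _)]
  rw [integral_const_mul, integral_const_mul, integral_pdf0_mul_id,
    integral_pdf0_mul_sq hv, integral_gaussianPDFReal_eq_one 0 hv]
  ring

end moments

lemma integrable_quad (γ : Measure (ℝ × ℝ)) [IsProbabilityMeasure γ] (A B C D E : ℝ)
    (i1 : Integrable (fun z : ℝ × ℝ => z.1) γ) (i2 : Integrable (fun z : ℝ × ℝ => z.1 ^ 2) γ)
    (j1 : Integrable (fun z : ℝ × ℝ => z.2) γ) (j2 : Integrable (fun z : ℝ × ℝ => z.2 ^ 2) γ) :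
    Integrable (fun z : ℝ × ℝ => A * z.1 ^ 2 + (B * z.1 + (C * z.2 ^ 2 + (D * z.2 + E)))) γ := by
  exact (i2.const_mul _).add ((i1.const_mul _).add ((j2.const_mul _).add
    ((j1.const_mul _).add (integrable_const _))))

lemma integral_quad (γ : Measure (ℝ × ℝ)) [IsProbabilityMeasure γ] (A B C D E : ℝ)
    (i1 : Integrable (fun z : ℝ × ℝ => z.1) γ) (i2 : Integrable (fun z : ℝ × ℝ => z.1 ^ 2) γ)
    (j1 : Integrable (fun z : ℝ × ℝ => z.2) γ) (j2 : Integrable (fun z : ℝ × ℝ => z.2 ^ 2) γ) :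
    ∫ z, (A * z.1 ^ 2 + (B * z.1 + (C * z.2 ^ 2 + (D * z.2 + E)))) ∂γ
      = A * (∫ z, z.1 ^ 2 ∂γ) + (B * (∫ z, z.1 ∂γ) + (C * (∫ z, z.2 ^ 2 ∂γ)
          + (D * (∫ z, z.2 ∂γ) + E))) := by
  have h4 : Integrable (fun z : ℝ × ℝ => D * z.2 + E) γ := by
    exact (j1.const_mul _).add (integrable_const _)
  have h3 : Integrable (fun z : ℝ × ℝ => C * z.2 ^ 2 + (D * z.2 + E)) γ := by
    exact (j2.const_mul _).add h4
  have h2 : Integrable (fun z : ℝ × ℝ => B * z.1 + (C * z.2 ^ 2 + (D * z.2 + E))) γ := by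
    exact (i1.const_mul _).add h3
  rw [integral_add (i2.const_mul _) h2, integral_add (i1.const_mul _) h3,
    integral_add (j2.const_mul _) h4, integral_add (j1.const_mul _) (integrable_const _),
    integral_const_mul, integral_const_mul, integral_const_mul, integral_const_mul, integral_const]
  simp [measure_univ]

lemma coupling_quad_bound (γ : Measure (ℝ × ℝ)) [IsProbabilityMeasure γ]
    {m0 m1 s0 s1 : ℝ} (hs0 : 0 < s0) (hs1 : 0 < s1)
    (i1 : Integrable (fun z : ℝ × ℝ => z.1) γ) (i2 : Integrable (fun z : ℝ × ℝ => z.1 ^ 2) γ)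
    (j1 : Integrable (fun z : ℝ × ℝ => z.2) γ) (j2 : Integrable (fun z : ℝ × ℝ => z.2 ^ 2) γ)
    (iq : Integrable (fun z : ℝ × ℝ => (z.1 - z.2) ^ 2) γ)
    (e1 : ∫ z, z.1 ∂γ = m0) (e2 : ∫ z, z.1 ^ 2 ∂γ = s0 ^ 2 + m0 ^ 2)
    (f1 : ∫ z, z.2 ∂γ = m1) (f2 : ∫ z, z.2 ^ 2 ∂γ = s1 ^ 2 + m1 ^ 2) :
    (m0 - m1) ^ 2 + (s0 - s1) ^ 2 ≤ ∫ z, (z.1 - z.2) ^ 2 ∂γ := by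
  set A : ℝ := 1 - s1 / s0 with hA
  set C : ℝ := 1 - s0 / s1 with hC
  set B : ℝ := -2 * A * m0 + 2 * (m0 - m1) with hB
  set D : ℝ := -2 * C * m1 - 2 * (m0 - m1) with hD
  set E : ℝ := A * m0 ^ 2 + C * m1 ^ 2 - 2 * (m0 - m1) * m0 + 2 * (m0 - m1) * m1
      + (m0 - m1) ^ 2 with hE
  have hpt : ∀ z : ℝ × ℝ,
      A * z.1 ^ 2 + (B * z.1 + (C * z.2 ^ 2 + (D * z.2 + E))) ≤ (z.1 - z.2) ^ 2 := by
    intro z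
    have key : 2 * ((z.1 - m0) * (z.2 - m1))
        ≤ s1 / s0 * (z.1 - m0) ^ 2 + s0 / s1 * (z.2 - m1) ^ 2 := by
      rw [div_mul_eq_mul_div, div_mul_eq_mul_div, div_add_div _ _ hs0.ne' hs1.ne',
        le_div_iff₀ (mul_pos hs0 hs1)]
      nlinarith [sq_nonneg (s1 * (z.1 - m0) - s0 * (z.2 - m1))]
    rw [hA, hB, hC, hD, hE, hA, hC]
    nlinarith [key]
  have hle := integral_mono (integrable_quad γ A B C D E i1 i2 j1 j2) iq hpt
  rw [integral_quad γ A B C D E i1 i2 j1 j2, e1, e2, f1, f2] at hle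
  refine le_trans (le_of_eq ?_) hle
  rw [hB, hD, hE, hA, hC]
  field_simp
  ring

lemma nnnorm_rpow_two_eq (r : ℝ) :
    (‖r‖₊ : ℝ≥0∞) ^ (2 : ℝ) = ENNReal.ofReal (r ^ 2) := by
  rw [show (2:ℝ) = ((2:ℕ):ℝ) by norm_num, ENNReal.rpow_natCast, ← ENNReal.coe_pow,
    ← nnnorm_pow]
  exact Real.enorm_eq_ofReal (sq_nonneg r)

end GaussianOptAux

open GaussianOptAux Real in
/-- optimal map between one-dimensional Gaussians. -/
theorem gaussian_optimal_map (m0 m1 : ℝ) (σ0 σ1 : ℝ≥0) (h0 : 0 < σ0) (h1 : 0 < σ1)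
    (T : ℝ → ℝ) (hT : T = fun x => m1 + Real.sqrt ((σ1 : ℝ) / (σ0 : ℝ)) * (x - m0)) :
    (gaussianReal m0 σ0).map T = gaussianReal m1 σ1 ∧
    (∫ x, (x - T x) ^ 2 ∂(gaussianReal m0 σ0)) =
      (m0 - m1) ^ 2 + (Real.sqrt σ0 - Real.sqrt σ1) ^ 2 ∧
    (gaussianReal m0 σ0).map (fun x => (x, T x)) ∈
      couplings (gaussianReal m0 σ0) (gaussianReal m1 σ1) ∧
    transportCost 2 ((gaussianReal m0 σ0).map (fun x => (x, T x))) =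
      wassersteinPow 2 (gaussianReal m0 σ0) (gaussianReal m1 σ1) := by
  have hσ0 : σ0 ≠ 0 := h0.ne'
  have hσ1 : σ1 ≠ 0 := h1.ne'
  have h0' : 0 < (σ0 : ℝ) := by exact_mod_cast h0
  have h1' : 0 < (σ1 : ℝ) := by exact_mod_cast h1
  set μ0 := gaussianReal m0 σ0 with hμ0
  set μ1 := gaussianReal m1 σ1 with hμ1
  set c : ℝ := Real.sqrt ((σ1 : ℝ) / (σ0 : ℝ)) with hc
  set s0 : ℝ := Real.sqrt (σ0 : ℝ) with hs0def
  set s1 : ℝ := Real.sqrt (σ1 : ℝ) with hs1def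
  have hs0 : 0 < s0 := Real.sqrt_pos.mpr h0'
  have hs1 : 0 < s1 := Real.sqrt_pos.mpr h1'
  have hs0sq : s0 ^ 2 = (σ0 : ℝ) := Real.sq_sqrt h0'.le
  have hs1sq : s1 ^ 2 = (σ1 : ℝ) := Real.sq_sqrt h1'.le
  have hcs : c = s1 / s0 := by rw [hc, hs0def, hs1def, Real.sqrt_div h1'.le _]
  have hTm : Measurable T := by
    rw [hT]; exact measurable_const.add ((measurable_id.sub_const m0).const_mul c)
  -- Part 1
  have h01 : μ0.map (fun x => x + (-m0)) = gaussianReal 0 σ0 := by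
    simpa using gaussianReal_map_add_const (μ := m0) (v := σ0) (-m0)
  have h02 : (gaussianReal 0 σ0).map (fun x => c * x) = gaussianReal 0 σ1 := by
    have h := gaussianReal_map_const_mul (μ := 0) (v := σ0) c
    rw [mul_zero] at h
    rw [h]
    congr 1
    have hc2 : c ^ 2 = (σ1 : ℝ) / (σ0 : ℝ) := Real.sq_sqrt (by positivity)
    refine NNReal.coe_injective ?_
    rw [NNReal.coe_mul, NNReal.coe_mk, hc2]
    field_simp
  have h03 : (gaussianReal 0 σ1).map (fun x => m1 + x) = gaussianReal m1 σ1 := by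
    simpa using gaussianReal_map_const_add (μ := 0) (v := σ1) m1
  have part1 : μ0.map T = gaussianReal m1 σ1 := by
    have hTeq : (fun x => m1 + x) ∘ ((fun x : ℝ => c * x) ∘ (fun x : ℝ => x + (-m0))) = T := by
      funext x
      rw [hT]
      simp only [Function.comp_apply]
      ring
    rw [← hTeq,
      ← Measure.map_map (measurable_const_add m1)
        ((measurable_const_mul c).comp (measurable_add_const (-m0))),
      ← Measure.map_map (measurable_const_mul c) (measurable_add_const (-m0)),
      h01, h02, h03]
  -- Part 3
  have hpair : Measurable fun x : ℝ => (x, T x) := measurable_id.prodMk hTm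
  have hfst : (μ0.map fun x => (x, T x)).map Prod.fst = μ0 := by
    rw [Measure.map_map measurable_fst hpair]
    exact Measure.map_id
  have hsnd : (μ0.map fun x => (x, T x)).map Prod.snd = μ1 := by
    rw [Measure.map_map measurable_snd hpair]
    exact part1
  -- Part 2
  have i1 : Integrable (fun x : ℝ => x) μ0 := integrable_id_gaussianReal hσ0 m0
  have i2 : Integrable (fun x : ℝ => x ^ 2) μ0 := integrable_sq_gaussianReal hσ0 m0
  have e1 : ∫ x, x ∂μ0 = m0 := integral_id_gaussianReal hσ0 m0
  have e2 : ∫ x, x ^ 2 ∂μ0 = s0 ^ 2 + m0 ^ 2 := by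
    rw [hμ0, integral_sq_gaussianReal hσ0 m0, hs0sq]
  have hfun : (fun x : ℝ => (x - T x) ^ 2)
      = fun x : ℝ => (1 - c) ^ 2 * x ^ 2
          + ((2 * (1 - c) * (c * m0 - m1)) * x + (c * m0 - m1) ^ 2) := by
    funext x; rw [hT]; ring
  have iq0 : Integrable (fun x : ℝ => (x - T x) ^ 2) μ0 := by
    rw [hfun]
    exact (i2.const_mul _).add ((i1.const_mul _).add (integrable_const _))
  have part2 : (∫ x, (x - T x) ^ 2 ∂μ0) = (m0 - m1) ^ 2 + (s0 - s1) ^ 2 := by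
    rw [hfun]
    have hInner : Integrable
        (fun x : ℝ => (2 * (1 - c) * (c * m0 - m1)) * x + (c * m0 - m1) ^ 2) μ0 := by
      exact (i1.const_mul _).add (integrable_const _)
    rw [integral_add (i2.const_mul _) hInner,
      integral_add (i1.const_mul _) (integrable_const _),
      integral_const_mul, integral_const_mul, integral_const, e1, e2]
    simp only [probReal_univ, smul_eq_mul, one_mul]
    rw [hcs]
    field_simp
    ring
  -- Part 4
  set γ0 := μ0.map (fun x => (x, T x)) with hγ0
  have hcost : ∀ (γ : Measure (ℝ × ℝ)), transportCost 2 γ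
      = ∫⁻ z, ENNReal.ofReal ((z.1 - z.2) ^ 2) ∂γ := by
    intro γ
    unfold transportCost
    congr 1
    funext z
    exact nnnorm_rpow_two_eq _
  have costEq : transportCost 2 γ0
      = ENNReal.ofReal ((m0 - m1) ^ 2 + (s0 - s1) ^ 2) := by
    rw [hcost, hγ0, lintegral_map (f := fun z : ℝ × ℝ => ENNReal.ofReal ((z.1 - z.2) ^ 2)) (((measurable_fst.sub measurable_snd).pow_const 2).ennreal_ofReal)
      hpair]
    rw [← ofReal_integral_eq_lintegral_ofReal iq0 (Filter.Eventually.of_forall fun x => sq_nonneg _)]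
    rw [part2]
  have hlow : ∀ γ ∈ couplings μ0 μ1,
      ENNReal.ofReal ((m0 - m1) ^ 2 + (s0 - s1) ^ 2) ≤ transportCost 2 γ := by
    rintro γ ⟨hmf, hms⟩
    haveI hP : IsProbabilityMeasure γ := by
      constructor
      have huniv : (γ.map Prod.fst) Set.univ = 1 := by rw [hmf]; exact measure_univ
      rwa [Measure.map_apply measurable_fst MeasurableSet.univ, Set.preimage_univ] at huniv
    rw [hcost]
    by_cases hfin : (∫⁻ z, ENNReal.ofReal ((z.1 - z.2) ^ 2) ∂γ) = ⊤
    · rw [hfin]; exact le_top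
    have hmeas : Measurable fun z : ℝ × ℝ => (z.1 - z.2) ^ 2 :=
      (measurable_fst.sub measurable_snd).pow_const 2
    have iq : Integrable (fun z : ℝ × ℝ => (z.1 - z.2) ^ 2) γ := by
      refine ⟨hmeas.aestronglyMeasurable, ?_⟩
      have hnn : ∀ z : ℝ × ℝ, ((‖(z.1 - z.2) ^ 2‖₊ : ℝ≥0∞)) = ENNReal.ofReal ((z.1 - z.2) ^ 2) :=
        fun z => Real.enorm_eq_ofReal (sq_nonneg _)
      show (∫⁻ z, (‖(z.1 - z.2) ^ 2‖₊ : ℝ≥0∞) ∂γ) < ⊤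
      simp_rw [hnn]
      exact lt_top_iff_ne_top.mpr hfin
    have hfstAE : AEMeasurable Prod.fst γ := measurable_fst.aemeasurable
    have hsndAE : AEMeasurable Prod.snd γ := measurable_snd.aemeasurable
    have gi1 : Integrable (fun z : ℝ × ℝ => z.1) γ :=
      (integrable_map_measure (f := Prod.fst) (g := fun x : ℝ => x)
        (by rw [hmf]; exact measurable_id.aestronglyMeasurable) hfstAE).mp
        (by rw [hmf]; exact integrable_id_gaussianReal hσ0 m0)
    have gi2 : Integrable (fun z : ℝ × ℝ => z.1 ^ 2) γ :=
      (integrable_map_measure (f := Prod.fst) (g := fun x : ℝ => x ^ 2)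
        (by rw [hmf]; exact (measurable_id.pow_const 2).aestronglyMeasurable) hfstAE).mp
        (by rw [hmf]; exact integrable_sq_gaussianReal hσ0 m0)
    have gj1 : Integrable (fun z : ℝ × ℝ => z.2) γ :=
      (integrable_map_measure (f := Prod.snd) (g := fun x : ℝ => x)
        (by rw [hms]; exact measurable_id.aestronglyMeasurable) hsndAE).mp
        (by rw [hms]; exact integrable_id_gaussianReal hσ1 m1)
    have gj2 : Integrable (fun z : ℝ × ℝ => z.2 ^ 2) γ :=
      (integrable_map_measure (f := Prod.snd) (g := fun x : ℝ => x ^ 2)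
        (by rw [hms]; exact (measurable_id.pow_const 2).aestronglyMeasurable) hsndAE).mp
        (by rw [hms]; exact integrable_sq_gaussianReal hσ1 m1)
    have ge1 : ∫ z, z.1 ∂γ = m0 := by
      have h := integral_map (φ := Prod.fst) (f := fun x : ℝ => x) hfstAE
        (by rw [hmf]; exact measurable_id.aestronglyMeasurable)
      rw [hmf] at h
      rw [← h]
      exact integral_id_gaussianReal hσ0 m0
    have ge2 : ∫ z, z.1 ^ 2 ∂γ = s0 ^ 2 + m0 ^ 2 := by
      have h := integral_map (φ := Prod.fst) (f := fun x : ℝ => x ^ 2) hfstAE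
        (by rw [hmf]; exact (measurable_id.pow_const 2).aestronglyMeasurable)
      rw [hmf] at h
      rw [← h, hμ0, integral_sq_gaussianReal hσ0 m0, hs0sq]
    have gf1 : ∫ z, z.2 ∂γ = m1 := by
      have h := integral_map (φ := Prod.snd) (f := fun x : ℝ => x) hsndAE
        (by rw [hms]; exact measurable_id.aestronglyMeasurable)
      rw [hms] at h
      rw [← h]
      exact integral_id_gaussianReal hσ1 m1
    have gf2 : ∫ z, z.2 ^ 2 ∂γ = s1 ^ 2 + m1 ^ 2 := by
      have h := integral_map (φ := Prod.snd) (f := fun x : ℝ => x ^ 2) hsndAE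
        (by rw [hms]; exact (measurable_id.pow_const 2).aestronglyMeasurable)
      rw [hms] at h
      rw [← h, hμ1, integral_sq_gaussianReal hσ1 m1, hs1sq]
    have hb := coupling_quad_bound γ hs0 hs1 gi1 gi2 gj1 gj2 iq ge1 ge2 gf1 gf2
    calc ENNReal.ofReal ((m0 - m1) ^ 2 + (s0 - s1) ^ 2)
        ≤ ENNReal.ofReal (∫ z, (z.1 - z.2) ^ 2 ∂γ) := ENNReal.ofReal_le_ofReal hb
      _ = ∫⁻ z, ENNReal.ofReal ((z.1 - z.2) ^ 2) ∂γ :=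
          ofReal_integral_eq_lintegral_ofReal iq (Filter.Eventually.of_forall fun z => sq_nonneg _)
  refine ⟨part1, part2, ⟨hfst, hsnd⟩, ?_⟩
  refine le_antisymm ?_ ?_
  · unfold wassersteinPow
    refine le_iInf₂ fun γ hγ => ?_
    rw [costEq]
    exact hlow γ hγ
  · exact iInf₂_le γ0 ⟨hfst, hsnd⟩
end
end

section
/- (Gaussian constant-speed geodesic.) Let m_0, m_1 ∈ ℝ and σ_0, σ_1 > 0, and for t ∈ [0,1] let μ_t = N(m_t, σ_t) with m_t = (1−t)m_0 + t·m_1 and σ_t = (1 + t(√(σ_1/σ_0) − 1))^2 · σ_0. Then for all 0 ≤ s ≤ t ≤ 1, W_2(μ_s, μ_t) = (t − s)·W_2(μ_0, μ_1), where W_2 denotes the 2-Wasserstein distance; in particular W_2(μ_s, μ_t)^2 = (t−s)^2·((m_0 − m_1)^2 + (√σ_0 − √σ_1)^2). -/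
open MeasureTheory Real Filter ProbabilityTheory NNReal ENNReal

lemma g_odd (b : ℝ) : (∫ x : ℝ, x * rexp (-b * x^2)) = 0 := by
  have h := integral_neg_eq_self (fun x : ℝ => x * rexp (-b * x^2)) (volume : Measure ℝ)
  simp only [neg_sq, neg_mul] at h ⊢
  rw [integral_neg] at h
  linarith

lemma g_sq {b : ℝ} (hb : 0 < b) :
    (∫ x : ℝ, x^2 * rexp (-b * x^2)) = √(π/b) / (2*b) := by
  have hu : ∀ x : ℝ, HasDerivAt (fun y : ℝ => y) 1 x := fun x => hasDerivAt_id x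
  have hv : ∀ x : ℝ, HasDerivAt (fun y : ℝ => -(2*b)⁻¹ * rexp (-b * y^2))
      (x * rexp (-b * x^2)) x := by
    intro x
    have h1 : HasDerivAt (fun y : ℝ => -b * y^2) (-b * (2*x)) x := by
      simpa using ((hasDerivAt_pow 2 x).const_mul (-b))
    have h2 := (h1.exp).const_mul (-(2*b)⁻¹)
    refine h2.congr_deriv ?_
    have hb2 : (2*b)⁻¹ * (2*b) = 1 := inv_mul_cancel₀ (by positivity)
    linear_combination (x * rexp (-b * x^2)) * hb2
  have hsq : Integrable (fun x : ℝ => x * (x * rexp (-b * x^2))) := by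
    have := integrable_rpow_mul_exp_neg_mul_sq hb (s := 2) (by norm_num)
    refine this.congr ?_
    refine Filter.EventuallyEq.of_eq (funext fun x => ?_)
    rw [show (2:ℝ) = ((2:ℕ):ℝ) by norm_num, Real.rpow_natCast]
    ring
  have h1v : Integrable (fun x : ℝ => (1:ℝ) * (-(2*b)⁻¹ * rexp (-b * x^2))) := by
    refine (((integrable_exp_neg_mul_sq hb).const_mul (-(2*b)⁻¹)).congr ?_)
    exact Filter.EventuallyEq.of_eq (funext fun x => by ring)
  have huv : Integrable (fun x : ℝ => x * (-(2*b)⁻¹ * rexp (-b * x^2))) := by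
    refine ((integrable_mul_exp_neg_mul_sq hb).const_mul (-(2*b)⁻¹)).congr ?_
    exact Filter.EventuallyEq.of_eq (funext fun x => by ring)
  have key := MeasureTheory.integral_mul_deriv_eq_deriv_mul_of_integrable (fun x _ => hu x) (fun x _ => hv x) hsq h1v huv
  have h2 : (∫ x : ℝ, x * (x * rexp (-b * x^2))) = ∫ x : ℝ, x^2 * rexp (-b * x^2) := by
    congr 1; funext x; ring
  have h3 : (∫ x : ℝ, (1:ℝ) * (-(2*b)⁻¹ * rexp (-b * x^2)))
      = -(2*b)⁻¹ * √(π/b) := by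
    simp_rw [one_mul]
    rw [integral_const_mul, integral_gaussian]
  rw [h2, h3] at key
  rw [key]
  field_simp


section Moments
variable {m : ℝ} {v : ℝ≥0}

lemma integral_gaussianReal_eq (hv : v ≠ 0) (g : ℝ → ℝ) :
    ∫ x, g x ∂(gaussianReal m v) = ∫ x, gaussianPDFReal m v x * g x := by
  rw [gaussianReal_of_var_ne_zero _ hv]
  have hpdf : gaussianPDF m v = fun x => ((gaussianPDFReal m v x).toNNReal : ℝ≥0∞) := rfl
  rw [hpdf]
  rw [integral_withDensity_eq_integral_smul
    ((measurable_gaussianPDFReal m v).real_toNNReal) g]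
  congr 1
  funext x
  rw [NNReal.smul_def, Real.coe_toNNReal _ (gaussianPDFReal_nonneg m v x), smul_eq_mul]

lemma integrable_gaussianReal_iff (hv : v ≠ 0) (g : ℝ → ℝ) :
    Integrable g (gaussianReal m v) ↔
      Integrable (fun x => gaussianPDFReal m v x * g x) volume := by
  rw [gaussianReal_of_var_ne_zero _ hv]
  have hpdf : gaussianPDF m v = fun x => ((gaussianPDFReal m v x).toNNReal : ℝ≥0∞) := rfl
  rw [hpdf, integrable_withDensity_iff_integrable_smul
    ((measurable_gaussianPDFReal m v).real_toNNReal)]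
  constructor <;> intro h <;> refine h.congr (Filter.EventuallyEq.of_eq (funext fun x => ?_)) <;>
    simp [NNReal.smul_def, smul_eq_mul, Real.coe_toNNReal _ (gaussianPDFReal_nonneg m v x)]

lemma gaussianPDFReal_zero_eq (hv : v ≠ 0) (x : ℝ) :
    gaussianPDFReal 0 v x = (√(2 * π * v))⁻¹ * rexp (-((2*(v:ℝ))⁻¹) * x^2) := by
  rw [gaussianPDFReal]
  congr 1
  rw [sub_zero]
  congr 1
  have hv' : (0:ℝ) < v := lt_of_le_of_ne (v.coe_nonneg) (by exact_mod_cast hv.symm)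
  field_simp

lemma gvar_pos (hv : v ≠ 0) : (0:ℝ) < (2*(v:ℝ))⁻¹ := by
  have hv' : (0:ℝ) < v := lt_of_le_of_ne (v.coe_nonneg) (by exact_mod_cast hv.symm)
  positivity

lemma integrable_id_gaussianReal_zero (hv : v ≠ 0) :
    Integrable (fun x : ℝ => x) (gaussianReal 0 v) := by
  rw [integrable_gaussianReal_iff hv]
  refine (((integrable_mul_exp_neg_mul_sq (gvar_pos hv)).const_mul
    (√(2 * π * v))⁻¹).congr (Filter.EventuallyEq.of_eq (funext fun x => ?_)))
  rw [gaussianPDFReal_zero_eq hv]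
  ring

lemma integrable_sq_gaussianReal_zero (hv : v ≠ 0) :
    Integrable (fun x : ℝ => x^2) (gaussianReal 0 v) := by
  rw [integrable_gaussianReal_iff hv]
  have := (integrable_rpow_mul_exp_neg_mul_sq (gvar_pos hv) (s := 2)
    (by norm_num)).const_mul (√(2 * π * v))⁻¹
  refine this.congr (Filter.EventuallyEq.of_eq (funext fun x => ?_))
  rw [gaussianPDFReal_zero_eq hv, show (2:ℝ) = ((2:ℕ):ℝ) by norm_num, Real.rpow_natCast]
  ring

lemma integral_id_gaussianReal_zero (hv : v ≠ 0) :
    ∫ x, x ∂(gaussianReal 0 v) = 0 := by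
  rw [integral_gaussianReal_eq hv]
  have : (fun x : ℝ => gaussianPDFReal 0 v x * x)
      = fun x => (√(2 * π * v))⁻¹ * (x * rexp (-((2*(v:ℝ))⁻¹) * x^2)) := by
    funext x; rw [gaussianPDFReal_zero_eq hv]; ring
  rw [this, integral_const_mul, g_odd, mul_zero]

lemma integral_sq_gaussianReal_zero (hv : v ≠ 0) :
    ∫ x, x^2 ∂(gaussianReal 0 v) = v := by
  rw [integral_gaussianReal_eq hv]
  have : (fun x : ℝ => gaussianPDFReal 0 v x * x^2)
      = fun x => (√(2 * π * v))⁻¹ * (x^2 * rexp (-((2*(v:ℝ))⁻¹) * x^2)) := by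
    funext x; rw [gaussianPDFReal_zero_eq hv]; ring
  rw [this, integral_const_mul, g_sq (gvar_pos hv)]
  have hv' : (0:ℝ) < v := lt_of_le_of_ne (v.coe_nonneg) (by exact_mod_cast hv.symm)
  have h1 : π / ((2*(v:ℝ))⁻¹) = 2 * π * v := by field_simp
  rw [h1]
  have h2 : (0:ℝ) < 2 * π * v := by positivity
  rw [div_eq_mul_inv, ← mul_assoc]
  rw [inv_mul_cancel₀ (by positivity : √(2 * π * (v:ℝ)) ≠ 0)]
  field_simp

end Moments

section MomentsGeneral
variable {m : ℝ} {v : ℝ≥0}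

lemma gaussianReal_eq_map (m : ℝ) (v : ℝ≥0) :
    gaussianReal m v = (gaussianReal 0 v).map (· + m) := by
  rw [gaussianReal_map_add_const, zero_add]

lemma integrable_id_gaussianReal (hv : v ≠ 0) :
    Integrable (fun x : ℝ => x) (gaussianReal m v) := by
  rw [gaussianReal_eq_map m v,
    integrable_map_measure measurable_id'.aestronglyMeasurable
      (measurable_add_const m).aemeasurable]
  exact ((integrable_id_gaussianReal_zero hv).add (integrable_const m)).congr
    (Filter.EventuallyEq.of_eq rfl)

lemma integral_id_gaussianReal' (hv : v ≠ 0) :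
    ∫ x, x ∂(gaussianReal m v) = m := by
  rw [gaussianReal_eq_map m v,
    integral_map (measurable_add_const m).aemeasurable
      measurable_id'.aestronglyMeasurable]
  rw [integral_add (integrable_id_gaussianReal_zero hv) (integrable_const m),
    integral_id_gaussianReal_zero hv, integral_const]
  simp

lemma integrable_sq_gaussianReal (hv : v ≠ 0) :
    Integrable (fun x : ℝ => x^2) (gaussianReal m v) := by
  rw [gaussianReal_eq_map m v,
    integrable_map_measure (measurable_id'.pow_const 2).aestronglyMeasurable
      (measurable_add_const m).aemeasurable]
  have h : Integrable (fun x : ℝ => x^2 + (2*m) * x + m^2) (gaussianReal 0 v) :=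
    ((integrable_sq_gaussianReal_zero hv).add
      ((integrable_id_gaussianReal_zero hv).const_mul (2*m))).add (integrable_const (m^2))
  exact h.congr (Filter.EventuallyEq.of_eq (funext fun x => by simp [Function.comp]; ring))

lemma integral_sq_gaussianReal (hv : v ≠ 0) :
    ∫ x, x^2 ∂(gaussianReal m v) = m^2 + v := by
  rw [gaussianReal_eq_map m v,
    integral_map (measurable_add_const m).aemeasurable
      (measurable_id'.pow_const 2).aestronglyMeasurable]
  have h : (fun x : ℝ => (x + m)^2) = fun x : ℝ => x^2 + (2*m) * x + m^2 := by
    funext x; ring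
  have hB : Integrable (fun x : ℝ => 2*m*x) (gaussianReal 0 v) := by
    simpa using (integrable_id_gaussianReal_zero hv).const_mul (2*m)
  have hAB : Integrable (fun x : ℝ => x^2 + 2*m*x) (gaussianReal 0 v) := by
    exact (integrable_sq_gaussianReal_zero hv).add hB
  rw [h, integral_add hAB (integrable_const (m^2)),
    integral_add (integrable_sq_gaussianReal_zero hv) hB,
    integral_sq_gaussianReal_zero hv, integral_const_mul, integral_id_gaussianReal_zero hv,
    integral_const]
  simp
  ring

end MomentsGeneral

open MeasureTheory ENNReal NNReal ProbabilityTheory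
noncomputable section

variable {E : Type*} [NormedAddCommGroup E] [MeasurableSpace E]

section Cost

lemma enn_sq (a : ℝ) : (‖a‖₊ : ℝ≥0∞) ^ (2:ℝ) = ENNReal.ofReal (a^2) := by
  rw [show (2:ℝ) = ((2:ℕ):ℝ) by norm_num, ENNReal.rpow_natCast, ← enorm_eq_nnnorm, ← ofReal_norm,
    ← ENNReal.ofReal_pow (norm_nonneg a)]
  congr 1
  rw [Real.norm_eq_abs, sq_abs]

lemma transportCost_two_eq (γ : Measure (ℝ × ℝ))
    (h : Integrable (fun z : ℝ × ℝ => (z.1 - z.2)^2) γ) :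
    transportCost 2 γ = ENNReal.ofReal (∫ z, (z.1 - z.2)^2 ∂γ) := by
  rw [transportCost]
  rw [show (fun z : ℝ × ℝ => (‖z.1 - z.2‖₊ : ℝ≥0∞) ^ (2:ℝ))
      = fun z : ℝ × ℝ => ENNReal.ofReal ((z.1 - z.2)^2) from funext fun z => enn_sq _]
  exact (ofReal_integral_eq_lintegral_ofReal h
    (Filter.Eventually.of_forall fun z => sq_nonneg _)).symm

end Cost

namespace GaussAux

lemma prob_of_coupling {m : ℝ} {v : ℝ≥0} {γ : Measure (ℝ × ℝ)}
    (h1 : γ.map Prod.fst = gaussianReal m v) : IsProbabilityMeasure γ := by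
  constructor
  have : γ.map Prod.fst Set.univ = 1 := by rw [h1]; simp
  rwa [Measure.map_apply measurable_fst MeasurableSet.univ, Set.preimage_univ] at this

section LB

variable {m m' : ℝ} {v v' : ℝ≥0} {γ : Measure (ℝ × ℝ)}

lemma integrable_fst_of (h1 : γ.map Prod.fst = gaussianReal m v) {g : ℝ → ℝ}
    (hg : Measurable g) (hgi : Integrable g (gaussianReal m v)) :
    Integrable (fun z : ℝ × ℝ => g z.1) γ := by
  rw [← h1] at hgi
  rwa [integrable_map_measure hg.aestronglyMeasurable measurable_fst.aemeasurable] at hgi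

lemma integral_fst_of (h1 : γ.map Prod.fst = gaussianReal m v) {g : ℝ → ℝ}
    (hg : Measurable g) :
    ∫ z, g z.1 ∂γ = ∫ x, g x ∂(gaussianReal m v) := by
  rw [← h1, integral_map measurable_fst.aemeasurable hg.aestronglyMeasurable]

lemma integrable_snd_of (h2 : γ.map Prod.snd = gaussianReal m' v') {g : ℝ → ℝ}
    (hg : Measurable g) (hgi : Integrable g (gaussianReal m' v')) :
    Integrable (fun z : ℝ × ℝ => g z.2) γ := by
  rw [← h2] at hgi
  rwa [integrable_map_measure hg.aestronglyMeasurable measurable_snd.aemeasurable] at hgi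

lemma integral_snd_of (h2 : γ.map Prod.snd = gaussianReal m' v') {g : ℝ → ℝ}
    (hg : Measurable g) :
    ∫ z, g z.2 ∂γ = ∫ x, g x ∂(gaussianReal m' v') := by
  rw [← h2, integral_map measurable_snd.aemeasurable hg.aestronglyMeasurable]

lemma cost_lower_bound (hv : v ≠ 0) (hv' : v' ≠ 0)
    (hγ : γ ∈ couplings (gaussianReal m v) (gaussianReal m' v')) :
    ENNReal.ofReal ((m - m')^2 + (√v - √v')^2) ≤ transportCost 2 γ := by
  obtain ⟨h1, h2⟩ := hγ
  have hγp : IsProbabilityMeasure γ := prob_of_coupling h1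
  -- integrability of coordinate functions
  have hX1 : Integrable (fun z : ℝ × ℝ => z.1) γ :=
    integrable_fst_of h1 measurable_id' (integrable_id_gaussianReal hv)
  have hY1 : Integrable (fun z : ℝ × ℝ => z.2) γ :=
    integrable_snd_of h2 measurable_id' (integrable_id_gaussianReal hv')
  have hX2 : Integrable (fun z : ℝ × ℝ => z.1^2) γ :=
    integrable_fst_of h1 (measurable_id'.pow_const 2) (integrable_sq_gaussianReal hv)
  have hY2 : Integrable (fun z : ℝ × ℝ => z.2^2) γ :=
    integrable_snd_of h2 (measurable_id'.pow_const 2) (integrable_sq_gaussianReal hv')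
  -- moments
  have hEX1 : ∫ z, z.1 ∂γ = m := by
    rw [integral_fst_of h1 measurable_id']; exact integral_id_gaussianReal' hv
  have hEY1 : ∫ z, z.2 ∂γ = m' := by
    rw [integral_snd_of h2 measurable_id']; exact integral_id_gaussianReal' hv'
  have hEX2 : ∫ z, z.1^2 ∂γ = m^2 + v := by
    rw [integral_fst_of h1 (measurable_id'.pow_const 2)]; exact integral_sq_gaussianReal hv
  have hEY2 : ∫ z, z.2^2 ∂γ = m'^2 + v' := by
    rw [integral_snd_of h2 (measurable_id'.pow_const 2)]; exact integral_sq_gaussianReal hv'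
  -- product integrable
  have hS : Integrable (fun z : ℝ × ℝ => z.1^2 + z.2^2) γ := by
    exact hX2.add hY2
  have hXY : Integrable (fun z : ℝ × ℝ => z.1 * z.2) γ := by
    refine hS.mono
      ((measurable_fst.mul measurable_snd).aestronglyMeasurable)
      (Filter.Eventually.of_forall fun z => ?_)
    simp only [Real.norm_eq_abs, abs_mul]
    rw [abs_of_nonneg (by positivity : (0:ℝ) ≤ z.1^2 + z.2^2)]
    nlinarith [sq_nonneg (|z.1| - |z.2|), sq_abs z.1, sq_abs z.2, abs_nonneg z.1, abs_nonneg z.2]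
  have hA : Integrable (fun z : ℝ × ℝ => z.1^2 - 2 * (z.1 * z.2)) γ := by
    exact hX2.sub (hXY.const_mul 2)
  have hsub2 : Integrable (fun z : ℝ × ℝ => (z.1 - z.2)^2) γ := by
    have h : Integrable (fun z : ℝ × ℝ => (z.1^2 - 2 * (z.1 * z.2)) + z.2^2) γ := by
      exact hA.add hY2
    exact h.congr (Filter.EventuallyEq.of_eq (funext fun z => by ring))
  -- the integral of (x-y)^2 in terms of EXY
  have hExy : ∫ z, (z.1 - z.2)^2 ∂γ
      = (m^2 + v) + (m'^2 + v') - 2 * ∫ z, z.1 * z.2 ∂γ := by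
    have hrw : (fun z : ℝ × ℝ => (z.1 - z.2)^2)
        = fun z => (z.1^2 - 2 * (z.1 * z.2)) + z.2^2 := funext fun z => by ring
    rw [hrw, integral_add hA hY2,
      integral_sub hX2 (hXY.const_mul 2), integral_const_mul, hEX2, hEY2]
    ring
  -- covariance bound
  have hB1 : Integrable (fun z : ℝ × ℝ => z.1^2 - 2*m*z.1) γ := by
    exact hX2.sub (hX1.const_mul (2*m))
  have hB2 : Integrable (fun z : ℝ × ℝ => z.2^2 - 2*m'*z.2) γ := by
    exact hY2.sub (hY1.const_mul (2*m'))
  have hcent1 : Integrable (fun z : ℝ × ℝ => (z.1 - m)^2) γ := by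
    have h : Integrable (fun z : ℝ × ℝ => (z.1^2 - 2*m*z.1) + m^2) γ := by
      simpa using hB1.add (integrable_const (m^2) (μ := γ))
    exact h.congr (Filter.EventuallyEq.of_eq (funext fun z => by ring))
  have hcent2 : Integrable (fun z : ℝ × ℝ => (z.2 - m')^2) γ := by
    have h : Integrable (fun z : ℝ × ℝ => (z.2^2 - 2*m'*z.2) + m'^2) γ := by
      simpa using hB2.add (integrable_const (m'^2) (μ := γ))
    exact h.congr (Filter.EventuallyEq.of_eq (funext fun z => by ring))
  have hEcent1 : ∫ z, (z.1 - m)^2 ∂γ = v := by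
    have hrw : (fun z : ℝ × ℝ => (z.1 - m)^2)
        = fun z => (z.1^2 - 2*m*z.1) + m^2 := funext fun z => by ring
    rw [hrw, integral_add hB1 (integrable_const _),
      integral_sub hX2 (hX1.const_mul (2*m)), integral_const_mul, hEX1, hEX2, integral_const]
    simp; ring
  have hEcent2 : ∫ z, (z.2 - m')^2 ∂γ = v' := by
    have hrw : (fun z : ℝ × ℝ => (z.2 - m')^2)
        = fun z => (z.2^2 - 2*m'*z.2) + m'^2 := funext fun z => by ring
    rw [hrw, integral_add hB2 (integrable_const _),
      integral_sub hY2 (hY1.const_mul (2*m')), integral_const_mul, hEY1, hEY2, integral_const]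
    simp; ring
  have hC1 : Integrable (fun z : ℝ × ℝ => z.1 * z.2 - m' * z.1) γ := by
    exact hXY.sub (hX1.const_mul m')
  have hC2 : Integrable (fun z : ℝ × ℝ => (z.1 * z.2 - m' * z.1) - m * z.2) γ := by
    exact hC1.sub (hY1.const_mul m)
  have hcentXY : Integrable (fun z : ℝ × ℝ => (z.1 - m) * (z.2 - m')) γ := by
    have h : Integrable (fun z : ℝ × ℝ => ((z.1 * z.2 - m' * z.1) - m * z.2) + m * m') γ := by
      exact hC2.add (integrable_const (m*m') (μ := γ))
    exact h.congr (Filter.EventuallyEq.of_eq (funext fun z => by ring))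
  have hEcentXY : ∫ z, (z.1 - m) * (z.2 - m') ∂γ = (∫ z, z.1 * z.2 ∂γ) - m * m' := by
    have hrw : (fun z : ℝ × ℝ => (z.1 - m) * (z.2 - m'))
        = fun z => ((z.1 * z.2 - m' * z.1) - m * z.2) + m * m' := funext fun z => by ring
    rw [hrw, integral_add hC2 (integrable_const _),
      integral_sub hC1 (hY1.const_mul m),
      integral_sub hXY (hX1.const_mul m'), integral_const_mul, integral_const_mul,
      hEX1, hEY1, integral_const]
    simp; ring
  -- pointwise Cauchy-Schwarz-type bound, integrated
  have hPW : ∀ z : ℝ × ℝ, 2 * (√v * √v') * ((z.1 - m) * (z.2 - m'))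
      ≤ (v' : ℝ) * (z.1 - m)^2 + (v : ℝ) * (z.2 - m')^2 := by
    intro z
    nlinarith [sq_nonneg (√v' * (z.1 - m) - √v * (z.2 - m')),
      Real.sq_sqrt v.coe_nonneg, Real.sq_sqrt v'.coe_nonneg]
  have hint : ∫ z, 2 * (√v * √v') * ((z.1 - m) * (z.2 - m')) ∂γ
      ≤ ∫ z, ((v' : ℝ) * (z.1 - m)^2 + (v : ℝ) * (z.2 - m')^2) ∂γ := by
    refine integral_mono (hcentXY.const_mul _)
      ((hcent1.const_mul _).add (hcent2.const_mul _)) hPW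
  rw [integral_const_mul, hEcentXY, integral_add (hcent1.const_mul _) (hcent2.const_mul _),
    integral_const_mul, integral_const_mul, hEcent1, hEcent2] at hint
  -- conclude
  rw [transportCost_two_eq γ hsub2, hExy]
  refine ENNReal.ofReal_le_ofReal ?_
  have hsv : (0:ℝ) < √v := Real.sqrt_pos.mpr (lt_of_le_of_ne v.coe_nonneg
    (by exact_mod_cast hv.symm))
  have hsv' : (0:ℝ) < √v' := Real.sqrt_pos.mpr (lt_of_le_of_ne v'.coe_nonneg
    (by exact_mod_cast hv'.symm))
  have h1' : (∫ z, z.1 * z.2 ∂γ) - m * m' ≤ √v * √v' := by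
    have hvv : (v':ℝ) * v + (v:ℝ) * v' = 2 * (√v * √v') * (√v * √v') := by
      rw [mul_assoc, mul_mul_mul_comm, Real.mul_self_sqrt v.coe_nonneg,
        Real.mul_self_sqrt v'.coe_nonneg]
      ring
    nlinarith [mul_pos hsv hsv']
  nlinarith [Real.sq_sqrt v.coe_nonneg, Real.sq_sqrt v'.coe_nonneg]

end LB

section UB

variable {m m' : ℝ} {v v' : ℝ≥0}

lemma integrable_affine_sq (hv : v ≠ 0) (c d : ℝ) :
    Integrable (fun x : ℝ => (c*x + d)^2) (gaussianReal m v) := by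
  have h1 : Integrable (fun x : ℝ => c^2 * x^2 + (2*c*d) * x) (gaussianReal m v) := by
    exact ((integrable_sq_gaussianReal hv).const_mul (c^2)).add
      ((integrable_id_gaussianReal hv).const_mul (2*c*d))
  have h : Integrable (fun x : ℝ => (c^2 * x^2 + (2*c*d) * x) + d^2) (gaussianReal m v) := by
    simpa using h1.add (integrable_const (d^2))
  exact h.congr (Filter.EventuallyEq.of_eq (funext fun x => by ring))

lemma integral_affine_sq (hv : v ≠ 0) (c d : ℝ) :
    ∫ x, (c*x + d)^2 ∂(gaussianReal m v) = c^2*(m^2+(v:ℝ)) + 2*c*d*m + d^2 := by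
  have hrw : (fun x : ℝ => (c*x + d)^2)
      = fun x => (c^2 * x^2 + (2*c*d) * x) + d^2 := funext fun x => by ring
  have hsq := (integrable_sq_gaussianReal (m := m) hv).const_mul (c^2)
  have hid := (integrable_id_gaussianReal (m := m) hv).const_mul (2*c*d)
  have h1 : Integrable (fun x : ℝ => c^2 * x^2 + (2*c*d) * x) (gaussianReal m v) := by
    exact hsq.add hid
  rw [hrw, integral_add h1 (integrable_const _), integral_add hsq hid,
    integral_const_mul, integral_const_mul, integral_id_gaussianReal' hv,
    integral_sq_gaussianReal hv, integral_const]
  simp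

lemma wassersteinPow_le (hv : v ≠ 0) (hv' : v' ≠ 0) :
    wassersteinPow 2 (gaussianReal m v) (gaussianReal m' v')
      ≤ ENNReal.ofReal ((m - m')^2 + (√v - √v')^2) := by
  have hsv : (0:ℝ) < √v := Real.sqrt_pos.mpr (lt_of_le_of_ne v.coe_nonneg
    (by exact_mod_cast hv.symm))
  have hsv' : (0:ℝ) < √v' := Real.sqrt_pos.mpr (lt_of_le_of_ne v'.coe_nonneg
    (by exact_mod_cast hv'.symm))
  set a : ℝ := √v' / √v with ha
  set b : ℝ := m' - a * m with hb
  set γ₀ : Measure (ℝ × ℝ) := (gaussianReal m v).map (fun x => (x, a * x + b)) with hγ₀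
  have hmeas : Measurable (fun x : ℝ => (x, a * x + b)) :=
    measurable_id'.prodMk ((measurable_id'.const_mul a).add_const b)
  have hfst : γ₀.map Prod.fst = gaussianReal m v := by
    rw [hγ₀, Measure.map_map measurable_fst hmeas]
    have h : Prod.fst ∘ (fun x : ℝ => (x, a * x + b)) = id := rfl
    rw [h, Measure.map_id]
  have hsnd : γ₀.map Prod.snd = gaussianReal m' v' := by
    rw [hγ₀, Measure.map_map measurable_snd hmeas]
    have h : Prod.snd ∘ (fun x : ℝ => (x, a * x + b)) = fun x : ℝ => a * x + b := rfl
    rw [h]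
    have h2 : (fun x : ℝ => a * x + b) = (· + b) ∘ (fun x : ℝ => a * x) := rfl
    rw [h2, ← Measure.map_map (measurable_add_const b) (measurable_const_mul a),
      gaussianReal_map_const_mul, gaussianReal_map_add_const]
    congr 1
    · rw [hb]; ring
    · refine NNReal.coe_inj.mp ?_
      push_cast
      rw [ha, div_pow, Real.sq_sqrt v.coe_nonneg, Real.sq_sqrt v'.coe_nonneg]
      field_simp
  have hcost : transportCost 2 γ₀ = ENNReal.ofReal ((m - m')^2 + (√v - √v')^2) := by
    have hrw : (fun z : ℝ × ℝ => (‖z.1 - z.2‖₊ : ℝ≥0∞) ^ (2:ℝ))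
        = fun z : ℝ × ℝ => ENNReal.ofReal ((z.1 - z.2)^2) := funext fun z => enn_sq _
    rw [transportCost, hrw, hγ₀,
      lintegral_map (by fun_prop : Measurable fun z : ℝ × ℝ => ENNReal.ofReal ((z.1 - z.2)^2)) hmeas]
    have hrw2 : (fun x : ℝ => ENNReal.ofReal ((x - (a * x + b))^2))
        = fun x : ℝ => ENNReal.ofReal (((1-a) * x + (-b))^2) := by
      funext x; congr 1; ring
    rw [hrw2, ← ofReal_integral_eq_lintegral_ofReal (integrable_affine_sq hv _ _)
      (Filter.Eventually.of_forall fun x => sq_nonneg _), integral_affine_sq hv]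
    congr 1
    rw [hb, ha]
    set S := √(v:ℝ) with hS
    set S' := √(v':ℝ) with hS'
    have h1 : (v:ℝ) = S^2 := (Real.sq_sqrt v.coe_nonneg).symm
    have h2 : (v':ℝ) = S'^2 := (Real.sq_sqrt v'.coe_nonneg).symm
    rw [h1]
    field_simp
    ring
  calc wassersteinPow 2 (gaussianReal m v) (gaussianReal m' v')
      ≤ transportCost 2 γ₀ := iInf₂_le γ₀ (show γ₀ ∈ couplings _ _ from ⟨hfst, hsnd⟩)
    _ = _ := hcost

lemma wassersteinPow_gaussian (hv : v ≠ 0) (hv' : v' ≠ 0) :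
    wassersteinPow 2 (gaussianReal m v) (gaussianReal m' v')
      = ENNReal.ofReal ((m - m')^2 + (√v - √v')^2) :=
  le_antisymm (wassersteinPow_le hv hv')
    (le_iInf₂ fun γ hγ => cost_lower_bound hv hv' hγ)

lemma wasserstein_gaussian (hv : v ≠ 0) (hv' : v' ≠ 0) :
    wasserstein 2 (gaussianReal m v) (gaussianReal m' v')
      = ENNReal.ofReal (√((m - m')^2 + (√v - √v')^2)) := by
  rw [wasserstein, wassersteinPow_gaussian hv hv',
    ENNReal.ofReal_rpow_of_nonneg (by positivity) (by norm_num)]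
  congr 1
  exact (Real.sqrt_eq_rpow _).symm

end UB


end GaussAux

open GaussAux in
/-- Gaussian constant-speed geodesic. -/
theorem gaussian_constant_speed (m0 m1 : ℝ) (σ0 σ1 : ℝ≥0) (h0 : 0 < σ0) (h1 : 0 < σ1)
    (μ : ℝ → Measure ℝ)
    (hμ : ∀ t, μ t = gaussianReal ((1 - t) * m0 + t * m1)
      (Real.toNNReal ((1 + t * (Real.sqrt ((σ1 : ℝ) / (σ0 : ℝ)) - 1)) ^ 2 * (σ0 : ℝ))))
    (s t : ℝ) (hs : 0 ≤ s) (hst : s ≤ t) (ht : t ≤ 1) :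
    wasserstein 2 (μ s) (μ t) =
      ENNReal.ofReal (t - s) * wasserstein 2 (gaussianReal m0 σ0) (gaussianReal m1 σ1) ∧
    wassersteinPow 2 (μ s) (μ t) =
      ENNReal.ofReal ((t - s) ^ 2 *
        ((m0 - m1) ^ 2 + (Real.sqrt σ0 - Real.sqrt σ1) ^ 2)) := by
  have hσ0 : (0:ℝ) < (σ0:ℝ) := h0
  have hσ1 : (0:ℝ) < (σ1:ℝ) := h1
  set r : ℝ := Real.sqrt ((σ1 : ℝ) / (σ0 : ℝ)) with hrdef
  have hr : 0 < r := Real.sqrt_pos.mpr (by positivity)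
  have hrs : r * Real.sqrt (σ0:ℝ) = Real.sqrt (σ1:ℝ) := by
    rw [hrdef, ← Real.sqrt_mul (by positivity) _]
    congr 1
    field_simp
  have hμs := hμ s
  have hμt := hμ t
  set cs : ℝ := 1 + s * (r - 1) with hcsdef
  set ct : ℝ := 1 + t * (r - 1) with hctdef
  have hcs : 0 < cs := by
    rcases lt_or_eq_of_le (le_trans hst ht) with h|h
    · rw [hcsdef]; nlinarith [mul_nonneg hs hr.le]
    · rw [hcsdef, ← h]; nlinarith [hr]
  have hct : 0 < ct := by
    rcases lt_or_eq_of_le ht with h|h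
    · rw [hctdef]; nlinarith [mul_nonneg (le_trans hs hst) hr.le]
    · rw [hctdef, h]; nlinarith [hr]
  set vs : ℝ≥0 := Real.toNNReal (cs^2 * (σ0:ℝ)) with hvsdef
  set vt : ℝ≥0 := Real.toNNReal (ct^2 * (σ0:ℝ)) with hvtdef
  have hvs0 : vs ≠ 0 := by
    rw [hvsdef]; exact (Real.toNNReal_pos.mpr (by positivity)).ne'
  have hvt0 : vt ≠ 0 := by
    rw [hvtdef]; exact (Real.toNNReal_pos.mpr (by positivity)).ne'
  have hvscoe : (vs:ℝ) = cs^2 * (σ0:ℝ) := by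
    rw [hvsdef]; exact Real.coe_toNNReal _ (by positivity)
  have hvtcoe : (vt:ℝ) = ct^2 * (σ0:ℝ) := by
    rw [hvtdef]; exact Real.coe_toNNReal _ (by positivity)
  have hsqs : Real.sqrt (vs:ℝ) = cs * Real.sqrt (σ0:ℝ) := by
    rw [hvscoe, Real.sqrt_mul (sq_nonneg cs), Real.sqrt_sq hcs.le]
  have hsqt : Real.sqrt (vt:ℝ) = ct * Real.sqrt (σ0:ℝ) := by
    rw [hvtcoe, Real.sqrt_mul (sq_nonneg ct), Real.sqrt_sq hct.le]
  have h5 : Real.sqrt (vs:ℝ) - Real.sqrt (vt:ℝ)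
      = (s - t) * (Real.sqrt (σ1:ℝ) - Real.sqrt (σ0:ℝ)) := by
    rw [hsqs, hsqt, hcsdef, hctdef]
    linear_combination (s - t) * hrs
  have hkey : ((1-s)*m0 + s*m1 - ((1-t)*m0 + t*m1))^2
        + (Real.sqrt (vs:ℝ) - Real.sqrt (vt:ℝ))^2
      = (t-s)^2 * ((m0-m1)^2 + (Real.sqrt (σ0:ℝ) - Real.sqrt (σ1:ℝ))^2) := by
    rw [h5]; ring
  constructor
  · rw [hμs, hμt, wasserstein_gaussian hvs0 hvt0, wasserstein_gaussian h0.ne' h1.ne',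
      ← ENNReal.ofReal_mul (sub_nonneg.mpr hst)]
    congr 1
    rw [hkey, Real.sqrt_mul (sq_nonneg _), Real.sqrt_sq (sub_nonneg.mpr hst)]
  · rw [hμs, hμt, wassersteinPow_gaussian hvs0 hvt0, hkey]
end
end
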